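/- arXiv:1907.10444 — 3 statements merged into one kernel-verified Lean document; each statement's English description precedes it below -/
import Mathlib

section
/- Let G be a unique-labeled SL HR grammar, A a nonterminal (or the start graph), x a vertex of rhs(A), σ a terminal label, and k an index. If traverse_{k,l}(A,x,σ) = (u,y) and traverse_{k,l'}(A,x,σ) = (u',y') are both defined for indices l ≠ l', then u = u', i.e., both traversals reference the same node of the derivation tree dt(A) (only the returned vertex component differs). -/
/-! Formalization of SL HR grammars (straight-line hyperedge replacement grammars),
their derivation trees, traversal, and tableaux data structures. -/

universe u v

/-- A (hyper)graph over a label alphabet `L`: vertices and edges are natural numbers,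
`att` gives the attachment sequence of an edge, `lab` its label, and `ext` is the
sequence of external vertices. -/
structure HRHypergraph (L : Type u) where
  V : Finset ℕ
  E : Finset ℕ
  att : ℕ → List ℕ
  lab : ℕ → L
  ext : List ℕ

namespace HRHypergraph

variable {L : Type u}

/-- Well-formedness of a hypergraph with respect to a rank function on labels:
nonempty vertex set, attachments are repetition-free sequences of vertices of
length equal to the rank of the label (ranks are `≥ 1`), and the external
vertices form a repetition-free sequence of vertices. -/
def WF (rank : L → ℕ) (g : HRHypergraph L) : Prop :=
  g.V.Nonempty ∧
  (∀ e ∈ g.E, ∀ v ∈ g.att e, v ∈ g.V) ∧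
  (∀ e ∈ g.E, (g.att e).Nodup) ∧
  (∀ e ∈ g.E, (g.att e).length = rank (g.lab e)) ∧
  (∀ a : L, 1 ≤ rank a) ∧
  (∀ v ∈ g.ext, v ∈ g.V) ∧
  g.ext.Nodup

/-- The rank of a hypergraph is its number of external vertices. -/
def rank (g : HRHypergraph L) : ℕ := g.ext.length

/-- The vertex-numbered convention: a hypergraph with `n` vertices and `k` external
vertices has `V = {1,…,n}` and `ext = (n-k+1)⋯n`. -/
def VertexNumbered (g : HRHypergraph L) (n : ℕ) : Prop :=
  g.V = Finset.Icc 1 n ∧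
  g.ext = (List.range g.ext.length).map (fun i => n - g.ext.length + 1 + i)

/-- A hypergraph is unique-labeled if for every vertex `x`, label `a` and position `i`
there is at most one edge labeled `a` whose `i`-th attached vertex is `x`. -/
def UniqueLabeled (g : HRHypergraph L) : Prop :=
  ∀ (x : ℕ) (a : L) (i : ℕ), ∀ e₁ ∈ g.E, ∀ e₂ ∈ g.E,
    g.lab e₁ = a → g.lab e₂ = a →
    (g.att e₁)[i]? = some x → (g.att e₂)[i]? = some x → e₁ = e₂

/-- `x` and `y` are `a`-`k`-`l`-neighbors: some `a`-labeled edge has `x` attached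
at position `k` and `y` attached at position `l` (positions are 0-based). -/
def Neighbors (g : HRHypergraph L) (a : L) (k l : ℕ) (x y : ℕ) : Prop :=
  ∃ e ∈ g.E, g.lab e = a ∧ (g.att e)[k]? = some x ∧ (g.att e)[l]? = some y

/-- An isomorphism of hypergraphs. -/
structure Iso (g h : HRHypergraph L) where
  vmap : ℕ → ℕ
  emap : ℕ → ℕ
  vmap_bij : Set.BijOn vmap ↑g.V ↑h.V
  emap_bij : Set.BijOn emap ↑g.E ↑h.E
  att_map : ∀ e ∈ g.E, h.att (emap e) = (g.att e).map vmap
  lab_map : ∀ e ∈ g.E, h.lab (emap e) = g.lab e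
  ext_map : h.ext = g.ext.map vmap

def Isomorphic (g h : HRHypergraph L) : Prop := Nonempty (Iso g h)

/-- `res` is (an instance of) the replacement of edge `e` of `g` by (a disjoint copy of)
the graph `h`: `e` is deleted, a renamed copy of `h` is added, the `i`-th external
vertex of the copy is identified with the `i`-th attached vertex of `e`, and the
external vertices of the result are those of `g`. -/
def IsReplacement (g : HRHypergraph L) (e : ℕ) (h : HRHypergraph L) (res : HRHypergraph L) : Prop :=
  (g.att e).length = h.ext.length ∧
  ∃ (ρ : ℕ → ℕ) (η : ℕ → ℕ),
    Set.InjOn ρ ↑h.V ∧ Set.InjOn η ↑h.E ∧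
    (∀ (i x : ℕ), h.ext[i]? = some x → (g.att e)[i]? = some (ρ x)) ∧
    (∀ x ∈ h.V, x ∉ h.ext → ρ x ∉ g.V) ∧
    (∀ f ∈ h.E, η f ∉ g.E) ∧
    res.V = g.V ∪ h.V.image ρ ∧
    res.E = g.E.erase e ∪ h.E.image η ∧
    (∀ f ∈ g.E.erase e, res.att f = g.att f ∧ res.lab f = g.lab f) ∧
    (∀ f ∈ h.E, res.att (η f) = (h.att f).map ρ ∧ res.lab (η f) = h.lab f) ∧
    res.ext = g.ext

/-- The canonical vertex renaming used in vertex-numbered replacement: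
the `i`-th external vertex of `h` is renamed to the `i`-th attached vertex of `e`,
every other (internal) vertex `x` of `h` is renamed to `n + x`. -/
def renameVN (g : HRHypergraph L) (e : ℕ) (h : HRHypergraph L) (n : ℕ) (x : ℕ) : ℕ :=
  if x ∈ h.ext then (g.att e).getD (List.idxOf x h.ext) 0 else n + x

/-- A fresh edge identifier for `g`. -/
def freshE (g : HRHypergraph L) : ℕ := g.E.sup id + 1

/-- Vertex-numbered replacement `g[e/h]`, where `n` is the number of vertices of `g`:
internal vertices of the copy of `h` are renumbered consecutively from `n+1`. -/
def replaceVN (g : HRHypergraph L) (e : ℕ) (h : HRHypergraph L) (n : ℕ) : HRHypergraph L where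
  V := g.V ∪ (h.V.filter (fun x => x ∉ h.ext)).image (fun x => n + x)
  E := g.E.erase e ∪ h.E.image (fun f => freshE g + f)
  att := fun f => if f ∈ g.E.erase e then g.att f
    else (h.att (f - freshE g)).map (renameVN g e h n)
  lab := fun f => if f ∈ g.E.erase e then g.lab f else h.lab (f - freshE g)
  ext := g.ext

end HRHypergraph

/-- A hyperedge replacement grammar over terminal alphabet `σ` and nonterminal
alphabet `ν`: each symbol has a rank, each nonterminal `A` has exactly one rule
`A → rhs A`, and there is a start hypergraph. -/
structure HRG (σ : Type u) (ν : Type v) where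
  rankT : σ → ℕ
  rankN : ν → ℕ
  rhs : ν → HRHypergraph (σ ⊕ ν)
  start : HRHypergraph (σ ⊕ ν)

namespace HRG

variable {σ : Type u} {ν : Type v}

/-- The rank function on the combined label alphabet. -/
def rankL (G : HRG σ ν) : σ ⊕ ν → ℕ := Sum.elim G.rankT G.rankN

/-- The graph associated with a derivation-tree root: the start graph for `none`,
the right-hand side of `A` for `some A`. -/
def graphOf (G : HRG σ ν) : Option ν → HRHypergraph (σ ⊕ ν)
  | none => G.start
  | some A => G.rhs A

/-- The rank of a derivation-tree root (the start graph has rank 0). -/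
def rankO (G : HRG σ ν) : Option ν → ℕ
  | none => 0
  | some A => G.rankN A

/-- Well-formedness of an HR grammar. -/
def WF (G : HRG σ ν) : Prop :=
  (∀ a : σ, 1 ≤ G.rankT a) ∧ (∀ A : ν, 1 ≤ G.rankN A) ∧
  (∀ A : ν, (G.rhs A).WF G.rankL) ∧
  (∀ A : ν, (G.rhs A).ext.length = G.rankN A) ∧
  G.start.WF G.rankL ∧ G.start.ext = []

/-- `A₁ ≤_NT A₂`: some edge of `rhs A₁` is labeled by the nonterminal `A₂`. -/
def ntStep (G : HRG σ ν) (A B : ν) : Prop :=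
  ∃ e ∈ (G.rhs A).E, (G.rhs A).lab e = Sum.inr B

/-- Some edge of the start graph is labeled by the nonterminal `B`. -/
def startStep (G : HRG σ ν) (B : ν) : Prop :=
  ∃ e ∈ G.start.E, G.start.lab e = Sum.inr B

/-- Straight-line restriction: the nonterminal dependency relation is acyclic
(it admits a strictly decreasing rank into `ℕ`), and every nonterminal is
reachable from the start graph (the DAG is rooted at `S`). -/
def SL (G : HRG σ ν) : Prop :=
  (∃ d : ν → ℕ, ∀ A B : ν, G.ntStep A B → d B < d A) ∧
  (∀ B : ν, ∃ A : ν, G.startStep A ∧ Relation.ReflTransGen G.ntStep A B)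

/-- One derivation step: replace some nonterminal edge by the right-hand side of
its rule. -/
def Derives (G : HRG σ ν) (g g' : HRHypergraph (σ ⊕ ν)) : Prop :=
  ∃ e ∈ g.E, ∃ B : ν, g.lab e = Sum.inr B ∧ HRHypergraph.IsReplacement g e (G.rhs B) g'

/-- A graph all of whose edges are labeled by terminals. -/
def TerminalGraph (g : HRHypergraph (σ ⊕ ν)) : Prop :=
  ∀ e ∈ g.E, ∃ a : σ, g.lab e = Sum.inl a

/-- The language of `G`: all terminal-labeled graphs derivable from the start graph. -/
def Lang (G : HRG σ ν) : Set (HRHypergraph (σ ⊕ ν)) :=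
  {g | Relation.ReflTransGen G.Derives G.start g ∧ TerminalGraph g}

/-- Lexicographic comparison of attachment sequences. -/
def listLexLE : List ℕ → List ℕ → Bool
  | [], _ => true
  | _ :: _, [] => false
  | a :: as, b :: bs => if a < b then true else if b < a then false else listLexLE as bs

/-- The derivation order `≤_dt` on edges: lexicographic on attachment sequences,
ties broken by the fixed linear order on nonterminals. -/
def dtLE [LinearOrder ν] (g : HRHypergraph (σ ⊕ ν)) (e f : ℕ) : Bool :=
  if g.att e = g.att f then
    match g.lab e, g.lab f with
    | Sum.inr B, Sum.inr C => decide (B ≤ C)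
    | _, _ => true
  else listLexLE (g.att e) (g.att f)

/-- The nonterminal edges of `g`, listed in the derivation order `≤_dt`. -/
def ntEdgeList [LinearOrder ν] (g : HRHypergraph (σ ⊕ ν)) : List ℕ :=
  ((g.E.filter (fun e => (g.lab e).isRight = true)).sort (· ≤ ·)).mergeSort (dtLE g)

/-- Replace all nonterminal edges of `g`, in derivation order, by `val` of their
labels, using vertex-numbered replacement. -/
def expandVal (G : HRG σ ν) [LinearOrder ν] (val : ν → HRHypergraph (σ ⊕ ν))
    (g : HRHypergraph (σ ⊕ ν)) : HRHypergraph (σ ⊕ ν) :=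
  (ntEdgeList g).foldl (fun acc e =>
    match acc.lab e with
    | Sum.inr B => HRHypergraph.replaceVN acc e (val B) acc.V.card
    | Sum.inl _ => acc) g

/-- `val` is the family `(val A)_{A ∈ N}` defined by the straight-line grammar:
`val A` is obtained from `rhs A` by replacing all its nonterminal edges, in
derivation order, by the values of their labels. -/
def ValFamily (G : HRG σ ν) [LinearOrder ν] (val : ν → HRHypergraph (σ ⊕ ν)) : Prop :=
  ∀ A : ν, val A = G.expandVal val (G.rhs A)

/-- The number of internal vertices of `val A`. -/
def iNodes (val : ν → HRHypergraph (σ ⊕ ν)) (A : ν) : ℕ :=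
  ((val A).V \ (val A).ext.toFinset).card

/-- The sequence of nonterminals labeling the derivation-tree nodes along the
Dewey address `u` (children are numbered from 0 in derivation order), starting
from a root labeled by the graph `g`. `none` if the address is invalid. -/
def ntSeq (G : HRG σ ν) [LinearOrder ν] : HRHypergraph (σ ⊕ ν) → List ℕ → Option (List ν)
  | _, [] => some []
  | g, i :: u =>
    match (ntEdgeList g)[i]? with
    | some e =>
      match g.lab e with
      | Sum.inr B => (ntSeq G (G.rhs B) u).map (fun Bs => B :: Bs)
      | Sum.inl _ => none
    | none => none

/-- The graph `g_u` labeling the derivation-tree node at Dewey address `u`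
(starting from a root labeled by `g`), if the address is valid. -/
def graphAt (G : HRG σ ν) [LinearOrder ν] : HRHypergraph (σ ⊕ ν) → List ℕ → Option (HRHypergraph (σ ⊕ ν))
  | g, [] => some g
  | g, i :: u =>
    match (ntEdgeList g)[i]? with
    | some e =>
      match g.lab e with
      | Sum.inr B => graphAt G (G.rhs B) u
      | Sum.inl _ => none
    | none => none

/-- The nonterminal (or start, `none`) labeling the derivation-tree node at address
`u` in the derivation tree rooted at `root`. -/
def ntAtNode (G : HRG σ ν) [LinearOrder ν] (root : Option ν) (u : List ℕ) :
    Option (Option ν) :=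
  (ntSeq G (G.graphOf root) u).map (fun Bs => (Bs.map some).getLastD root)

/-- `iN`-value of the label of edge `e` (0 for terminal labels). -/
def iNOf (iN : ν → ℕ) (g : HRHypergraph (σ ⊕ ν)) (e : ℕ) : ℕ :=
  match g.lab e with
  | Sum.inr B => iN B
  | Sum.inl _ => 0

/-- `first(u)` relative to the derivation tree rooted at `g`, where `iN B` is the
number of internal vertices of `val B`:
`first(ε) = 0` and `first(v.i) = first(v) + |V_{g_v}| - |ext_{g_v}| + Σ_{j<i} iN(lab e_j)`. -/
def firstAux (G : HRG σ ν) [LinearOrder ν] (iN : ν → ℕ) :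
    HRHypergraph (σ ⊕ ν) → List ℕ → ℕ
  | _, [] => 0
  | g, i :: u =>
    (g.V.card - g.ext.length + (((ntEdgeList g).take i).map (iNOf iN g)).sum) +
      (match (ntEdgeList g)[i]? with
       | some e =>
         (match g.lab e with
          | Sum.inr B => firstAux G iN (G.rhs B) u
          | Sum.inl _ => 0)
       | none => 0)

/-- `TraverseRel G a k l g x u y` formalizes `traverse_{k,l}(A,x,a) = (u,y)` for the
rule with right-hand side `g`: either `g` itself contains an `a`-labeled edge with
`x` at position `k` and `y` at position `l` (then `u = ε`), or `x` is the `j`-th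
attached vertex of the `i`-th nonterminal edge `e` of `g` and the traversal
continues from the `j`-th external vertex of `rhs (lab e)`. -/
inductive TraverseRel (G : HRG σ ν) [LinearOrder ν] (a : σ) (k l : ℕ) :
    HRHypergraph (σ ⊕ ν) → ℕ → List ℕ → ℕ → Prop
  | base {g : HRHypergraph (σ ⊕ ν)} {x y e : ℕ}
      (he : e ∈ g.E) (hlab : g.lab e = Sum.inl a)
      (hk : (g.att e)[k]? = some x) (hl : (g.att e)[l]? = some y) :
      TraverseRel G a k l g x [] y
  | step {g : HRHypergraph (σ ⊕ ν)} {x i e : ℕ} {B : ν} {j z : ℕ} {v : List ℕ} {y : ℕ}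
      (hi : (ntEdgeList g)[i]? = some e) (hB : g.lab e = Sum.inr B)
      (hx : (g.att e)[j]? = some x) (hz : (G.rhs B).ext[j]? = some z)
      (hrec : TraverseRel G a k l (G.rhs B) z v y) :
      TraverseRel G a k l g x (i :: v) y

/-- `InternalRel G g0 u x v y` formalizes `internal(u,x) = (v,y)` in the derivation
tree rooted at `g0`: the vertex `x` of `g_u` is identified, through the chain of
external-vertex identifications of the derivation, with the internal vertex `y`
of `g_v` at the ancestor `v` of `u`. -/
inductive InternalRel (G : HRG σ ν) [LinearOrder ν] (g0 : HRHypergraph (σ ⊕ ν)) :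
    List ℕ → ℕ → List ℕ → ℕ → Prop
  | refl {u : List ℕ} {x : ℕ} {g : HRHypergraph (σ ⊕ ν)}
      (hg : graphAt G g0 u = some g) (hx : x ∈ g.V) (hint : x ∉ g.ext) :
      InternalRel G g0 u x u x
  | up {u : List ℕ} {i x j : ℕ} {g gc : HRHypergraph (σ ⊕ ν)} {e y : ℕ} {v : List ℕ} {z : ℕ}
      (hg : graphAt G g0 u = some g)
      (he : (ntEdgeList g)[i]? = some e)
      (hgc : graphAt G g0 (u ++ [i]) = some gc)
      (hx : gc.ext[j]? = some x) (hy : (g.att e)[j]? = some y)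
      (hrec : InternalRel G g0 u y v z) :
      InternalRel G g0 (u ++ [i]) x v z

end HRG

/-- A tableau: a matrix of cells (each holding a pointer `nxt` and a vertex number
`vtx`), together with the column vectors `nt` and `first` and an offset.
Rows and columns are 0-based; `nt i = none` denotes the start graph. -/
structure Tableau (ν : Type v) where
  rows : ℕ
  cols : ℕ
  nxt : ℕ → ℕ → Option (ℕ × ℕ)
  vtx : ℕ → ℕ → ℕ
  nt : ℕ → Option ν
  first : ℕ → ℕ
  off : ℕ

namespace Tableau

variable {ν : Type v}

/-- Following the `nxt` pointer of cell `(i,j)`, and one more pointer if the first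
one is downwards (targets a row strictly below `i`). -/
def findVertex (t : Tableau ν) (i j : ℕ) : Option (ℕ × ℕ) :=
  match t.nxt i j with
  | none => none
  | some (i', j') => if i' ≤ i then some (i', j') else t.nxt i' j'

/-- The cell of `t` redirected by `concat` for column `j`: the target of the
downwards pointer of the first-row cell `(0,j)`, if that pointer is downwards,
and `(0,j)` itself otherwise. -/
def downTarget (t : Tableau ν) (j : ℕ) : ℕ × ℕ :=
  match t.nxt 0 j with
  | some (i', j') => if 0 < i' then (i', j') else (0, j)
  | none => (0, j)

end Tableau

namespace HRG

variable {σ : Type u} {ν : Type v}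

/-- The first `m` rows of the tableau `t` model the path from the root (labeled by
`graphOf root`) to the node `u` (with `m = |u| + 1`) of the derivation tree:
rows carry the correct nonterminals and (offset-adjusted) `first` values, and for
every external vertex of every row graph, `findVertex` reaches, in at most two
pointer steps, the cell holding the internal vertex it is identified with
(a first-row cell with `vtx = 0` if no such vertex exists), and a pointer is
upwards iff no lower row shares its `findVertex` value. -/
def ModelsUpTo (G : HRG σ ν) [LinearOrder ν] (iN : ν → ℕ) (root : Option ν)
    (u : List ℕ) (t : Tableau ν) (m : ℕ) : Prop :=
  ∃ Bs : List ν, ntSeq G (G.graphOf root) u = some Bs ∧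
    m = u.length + 1 ∧ m ≤ t.rows ∧
    (∀ i < m, t.nt i = (root :: Bs.map some).getD i root) ∧
    (∀ i < m, t.first i + t.off = firstAux G iN (G.graphOf root) (u.take i)) ∧
    (∀ i < m, ∀ gi, graphAt G (G.graphOf root) (u.take i) = some gi →
      ∀ j y, gi.ext[j]? = some y →
        (∀ v z, InternalRel G (G.graphOf root) (u.take i) y v z →
          ∃ j', t.findVertex i j = some (v.length, j') ∧ t.vtx v.length j' = z) ∧
        ((¬ ∃ v z, InternalRel G (G.graphOf root) (u.take i) y v z) →
          ∃ j', t.findVertex i j = some (0, j') ∧ t.vtx 0 j' = 0) ∧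
        ((∀ p ∈ t.nxt i j, p.1 ≤ i) ↔
          ¬ ∃ i' j', i < i' ∧ i' < m ∧ j' < t.cols ∧
            t.findVertex i' j' = t.findVertex i j))

/-- The tableau `t` models the path from the root to the node `u` of the derivation
tree rooted at `graphOf root` (Definition of `tab(u)`): in addition to
`ModelsUpTo` for all rows, it has exactly `|u| + 1` rows, offset `0`, and all
out-of-range entries are `0`. -/
def Models (G : HRG σ ν) [LinearOrder ν] (iN : ν → ℕ) (root : Option ν)
    (u : List ℕ) (t : Tableau ν) : Prop :=
  ModelsUpTo G iN root u t (u.length + 1) ∧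
  t.rows = u.length + 1 ∧ t.off = 0 ∧
  (∀ i j : ℕ, t.rows ≤ i ∨ t.cols ≤ j → t.nxt i j = none ∧ t.vtx i j = 0)

/-- The one-row tableau `t_ε` for the root of the derivation tree of `root`:
every column `j < rank root` holds a self-loop (upwards) pointer, all other
entries are `0`. -/
def initTab (G : HRG σ ν) (root : Option ν) (κ : ℕ) : Tableau ν where
  rows := 1
  cols := κ
  nxt := fun a b => if a = 0 ∧ b < G.rankO root then some (0, b) else none
  vtx := fun _ _ => 0
  nt := fun _ => root
  first := fun _ => 0
  off := 0

/-- One step of Algorithm `createTableau`: extend the tableau `t`, which models a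
path ending in a node labeled by nonterminal `B = nt (rows - 1)`, by a new bottom
row for the `l`-th child (the `l`-th nonterminal edge `e_l` of `rhs B`): for each
`j < rank e_l`, with `x = att(e_l)[j]`, if `x` is internal then the new cell points
to the cell above which receives `vtx = x`; if `x` is the `j'`-th external vertex
of `rhs B` then the new cell takes over the pointer of cell `(rows-1, j')`, which
in turn points down to the new cell, and all pointers from higher rows targeting
`(rows-1, j')` are redirected to the new cell. -/
def extendTab (G : HRG σ ν) [LinearOrder ν] (iN : ν → ℕ) (t : Tableau ν) (l : ℕ) :
    Tableau ν :=
  let m := t.rows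
  let g := G.graphOf (t.nt (m - 1))
  let es := ntEdgeList g
  let e := es.getD l 0
  let al := g.att e
  let isExtCol : ℕ → Bool := fun c =>
    match g.ext[c]? with
    | some x => decide (x ∈ al)
    | none => false
  let newColOf : ℕ → ℕ := fun c =>
    match g.ext[c]? with
    | some x => List.idxOf x al
    | none => 0
  { rows := m + 1
    cols := t.cols
    nt := fun i => if i = m then
        (match g.lab e with
         | Sum.inr B => some B
         | Sum.inl _ => none)
      else t.nt i
    first := fun i => if i = m then
        t.first (m - 1) + g.V.card - g.ext.length + ((es.take l).map (iNOf iN g)).sum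
      else t.first i
    off := t.off
    vtx := fun i j =>
      if i = m then 0
      else if i = m - 1 ∧ j < al.length ∧ al.getD j 0 ∉ g.ext then al.getD j 0
      else t.vtx i j
    nxt := fun i j =>
      if i = m then
        (if j < al.length then
          (if al.getD j 0 ∈ g.ext then t.nxt (m - 1) (List.idxOf (al.getD j 0) g.ext)
           else some (m - 1, j))
         else none)
      else if i = m - 1 then
        (if isExtCol j then some (m, newColOf j) else t.nxt i j)
      else
        (match t.nxt i j with
         | some (i', c) => if i' = m - 1 ∧ isExtCol c then some (m, newColOf c) else some (i', c)
         | none => none) }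

/-- Algorithm `createTableau`: the tableau for the node at address `u` of the
derivation tree rooted at `graphOf root`, built by starting from `initTab` and
extending one row per step along the path. -/
def createTableau (G : HRG σ ν) [LinearOrder ν] (iN : ν → ℕ) (κ : ℕ)
    (root : Option ν) (u : List ℕ) : Tableau ν :=
  u.foldl (extendTab G iN) (initTab G root κ)

open Classical in
/-- Algorithm `concat` (as the resulting virtual tableau): concatenate `t₂`
(modeling a path in the derivation tree of the nonterminal at row `r` of `t₁`)
to row `r` of `t₁`; `kB` is the rank of that nonterminal. Rows `< r` are those
of `t₁`; rows `≥ r` come from `t₂`, with, for each column `j < kB`, the relevant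
upwards pointer of `t₂` redirected to `findVertex(t₁(r,j))`, and with the
offset of `t₂` set to `t₁.off + t₁.first r`. -/
noncomputable def concatTab (t₂ t₁ : Tableau ν) (r kB : ℕ) : Tableau ν where
  rows := r + t₂.rows
  cols := t₁.cols
  nt := fun i => if i < r then t₁.nt i else t₂.nt (i - r)
  first := fun i => if i < r then t₁.first i + t₁.off
    else t₂.first (i - r) + (t₁.off + t₁.first r)
  off := 0
  vtx := fun i j => if i < r then t₁.vtx i j else t₂.vtx (i - r) j
  nxt := fun i j =>
    if i < r then t₁.nxt i j
    else if h : ∃ j0, j0 < kB ∧ Tableau.downTarget t₂ j0 = (i - r, j) then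
      t₁.findVertex r h.choose
    else (t₂.nxt (i - r) j).map (fun p => (p.1 + r, p.2))

end HRG

/-- The string graph with `N` consecutive `a`-labeled edges: vertices `1,…,N+1`,
the `i`-th edge attached to `(i, i+1)`. -/
def pathGraph {L : Type u} (N : ℕ) (a : L) : HRHypergraph L where
  V := Finset.Icc 1 (N + 1)
  E := Finset.Icc 1 N
  att := fun e => [e, e + 1]
  lab := fun _ => a
  ext := []

/-- The star grammar `G_n` of Figure `starGrammar1`: terminal alphabet `{a}` of rank 2,
nonterminals `A_0, …, A_{n-1}` of rank 2; the start graph has vertices `{1,2,3}` and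
two `A_0`-edges attached to `(1,2)` and `(1,3)`; `rhs A_i` has vertices `{1,2,3}`,
external vertices `(2,3)`, and two edges labeled `A_{i+1}` (labeled `a` for `i = n-1`)
attached to `(2,3)` and `(2,1)`. -/
def starG (n : ℕ) : HRG Unit (Fin n) where
  rankT := fun _ => 2
  rankN := fun _ => 2
  rhs := fun i =>
    { V := {1, 2, 3}
      E := {1, 2}
      att := fun e => if e = 1 then [2, 3] else [2, 1]
      lab := fun _ => if h : i.val + 1 < n then Sum.inr ⟨i.val + 1, h⟩ else Sum.inl ()
      ext := [2, 3] }
  start :=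
    { V := {1, 2, 3}
      E := {1, 2}
      att := fun e => if e = 1 then [1, 2] else [1, 3]
      lab := fun _ => if h : 0 < n then Sum.inr ⟨0, h⟩ else Sum.inl ()
      ext := [] }


section Aux

open HRHypergraph HRG

namespace StmtNine

variable {σ ν : Type} [LinearOrder ν]

/-- The fold step used in `expandVal`. -/
def stepF (val : ν → HRHypergraph (σ ⊕ ν)) (acc : HRHypergraph (σ ⊕ ν)) (e : ℕ) :
    HRHypergraph (σ ⊕ ν) :=
  match acc.lab e with
  | Sum.inr B => HRHypergraph.replaceVN acc e (val B) acc.V.card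
  | Sum.inl _ => acc

lemma expandVal_eq (G : HRG σ ν) (val : ν → HRHypergraph (σ ⊕ ν)) (g : HRHypergraph (σ ⊕ ν)) :
    G.expandVal val g = (ntEdgeList g).foldl (stepF val) g := rfl

lemma stepF_inl (val : ν → HRHypergraph (σ ⊕ ν)) {acc : HRHypergraph (σ ⊕ ν)} {e : ℕ} {b : σ}
    (h : acc.lab e = Sum.inl b) : stepF val acc e = acc := by
  unfold stepF; rw [h]

lemma stepF_inr (val : ν → HRHypergraph (σ ⊕ ν)) {acc : HRHypergraph (σ ⊕ ν)} {e : ℕ} {B : ν}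
    (h : acc.lab e = Sum.inr B) :
    stepF val acc e = replaceVN acc e (val B) acc.V.card := by
  unfold stepF; rw [h]

lemma mem_lt_freshE {g : HRHypergraph (σ ⊕ ν)} {f : ℕ} (h : f ∈ g.E) : f < freshE g :=
  Nat.lt_succ_of_le (Finset.le_sup (f := id) h)

lemma replace_preserve {acc h : HRHypergraph (σ ⊕ ν)} {e f n : ℕ}
    (hf : f ∈ acc.E) (hne : f ≠ e) :
    f ∈ (replaceVN acc e h n).E ∧ (replaceVN acc e h n).att f = acc.att f ∧
      (replaceVN acc e h n).lab f = acc.lab f := by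
  have hmem : f ∈ acc.E.erase e := Finset.mem_erase.mpr ⟨hne, hf⟩
  refine ⟨Finset.mem_union_left _ hmem, ?_, ?_⟩
  · show (if f ∈ acc.E.erase e then acc.att f else _) = acc.att f
    rw [if_pos hmem]
  · show (if f ∈ acc.E.erase e then acc.lab f else _) = acc.lab f
    rw [if_pos hmem]

lemma stepF_preserve (val : ν → HRHypergraph (σ ⊕ ν)) {acc : HRHypergraph (σ ⊕ ν)} {f e : ℕ}
    (hf : f ∈ acc.E) (hcond : (∃ a : σ, acc.lab f = Sum.inl a) ∨ f ≠ e) :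
    f ∈ (stepF val acc e).E ∧ (stepF val acc e).att f = acc.att f ∧
      (stepF val acc e).lab f = acc.lab f := by
  cases hlabe : acc.lab e with
  | inl b => rw [stepF_inl val hlabe]; exact ⟨hf, rfl, rfl⟩
  | inr B =>
    have hne : f ≠ e := by
      rcases hcond with ⟨a, ha⟩ | h
      · intro h; rw [h, hlabe] at ha; cases ha
      · exact h
    rw [stepF_inr val hlabe]
    exact replace_preserve hf hne

lemma foldl_preserve (val : ν → HRHypergraph (σ ⊕ ν)) :
    ∀ (es : List ℕ) (acc : HRHypergraph (σ ⊕ ν)) (f : ℕ), f ∈ acc.E →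
      ((∃ a : σ, acc.lab f = Sum.inl a) ∨ f ∉ es) →
      f ∈ (es.foldl (stepF val) acc).E ∧
        (es.foldl (stepF val) acc).att f = acc.att f ∧
        (es.foldl (stepF val) acc).lab f = acc.lab f := by
  intro es
  induction es with
  | nil => intro acc f hf _; exact ⟨hf, rfl, rfl⟩
  | cons e es ih =>
    intro acc f hf hcond
    have hcond' : (∃ a : σ, acc.lab f = Sum.inl a) ∨ f ≠ e := by
      rcases hcond with h | h
      · exact Or.inl h
      · exact Or.inr (fun he => h (he ▸ List.mem_cons_self (a := e) (l := es)))
    obtain ⟨h1, h2, h3⟩ := stepF_preserve val hf hcond'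
    have hcond'' : (∃ a : σ, (stepF val acc e).lab f = Sum.inl a) ∨ f ∉ es := by
      rcases hcond with h | h
      · exact Or.inl (h3 ▸ h)
      · exact Or.inr (fun he => h (List.mem_cons_of_mem _ he))
    obtain ⟨g1, g2, g3⟩ := ih (stepF val acc e) f h1 hcond''
    exact ⟨g1, g2.trans h2, g3.trans h3⟩

lemma stepF_ext (val : ν → HRHypergraph (σ ⊕ ν)) (acc : HRHypergraph (σ ⊕ ν)) (e : ℕ) :
    (stepF val acc e).ext = acc.ext := by
  cases hlabe : acc.lab e with
  | inl b => rw [stepF_inl val hlabe]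
  | inr B => rw [stepF_inr val hlabe]; rfl

lemma foldl_ext (val : ν → HRHypergraph (σ ⊕ ν)) :
    ∀ (es : List ℕ) (acc : HRHypergraph (σ ⊕ ν)),
      (es.foldl (stepF val) acc).ext = acc.ext := by
  intro es
  induction es with
  | nil => intro acc; rfl
  | cons e es ih => intro acc; rw [List.foldl_cons, ih, stepF_ext]

lemma ntEdgeList_nodup (g : HRHypergraph (σ ⊕ ν)) : (ntEdgeList g).Nodup :=
  (List.mergeSort_perm _ _).nodup_iff.mpr (Finset.sort_nodup _ _)

lemma mem_ntEdgeList {g : HRHypergraph (σ ⊕ ν)} {e : ℕ} :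
    e ∈ ntEdgeList g ↔ e ∈ g.E ∧ (g.lab e).isRight := by
  unfold ntEdgeList
  rw [(List.mergeSort_perm _ _).mem_iff, Finset.mem_sort, Finset.mem_filter]

lemma indexOf_eq_of_nodup : ∀ {l : List ℕ} {j z : ℕ}, l.Nodup → l[j]? = some z →
    l.idxOf z = j := by
  intro l
  induction l with
  | nil => intro j z _ hj; simp at hj
  | cons b t ih =>
    intro j z hn hj
    cases j with
    | zero =>
      simp only [List.getElem?_cons_zero, Option.some.injEq] at hj
      subst hj; exact List.idxOf_cons_self
    | succ j =>
      simp only [List.getElem?_cons_succ] at hj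
      have hz : z ∈ t := List.mem_of_getElem? hj
      have hbz : b ≠ z := by
        intro h; subst h
        exact (List.nodup_cons.mp hn).1 hz
      rw [List.idxOf_cons_ne _ hbz, ih (List.nodup_cons.mp hn).2 hj]

/-- The accumulated graph after processing the first `i` nonterminal edges. -/
def accAt (val : ν → HRHypergraph (σ ⊕ ν)) (g : HRHypergraph (σ ⊕ ν)) (i : ℕ) :
    HRHypergraph (σ ⊕ ν) :=
  ((ntEdgeList g).take i).foldl (stepF val) g

lemma take_succ_of_get {L : List ℕ} {i e : ℕ} (h : L[i]? = some e) :
    L.take (i + 1) = L.take i ++ [e] := by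
  rw [List.take_succ, h]; rfl

lemma not_mem_take {L : List ℕ} {i e : ℕ} (hN : L.Nodup) (h : L[i]? = some e) :
    e ∉ L.take i := by
  have h1 : (L.take (i + 1)).Nodup := (List.take_sublist _ _).nodup hN
  rw [take_succ_of_get h, List.nodup_append] at h1
  exact fun hm => h1.2.2 _ hm _ (List.mem_singleton_self e) rfl

lemma mem_drop_props {L : List ℕ} {i e : ℕ} (hN : L.Nodup) (h : L[i]? = some e)
    {e' : ℕ} (h' : e' ∈ L.drop (i + 1)) : e' ∉ L.take i ∧ e' ≠ e := by
  have hsplit : (L.take (i + 1) ++ L.drop (i + 1)).Nodup := by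
    rw [List.take_append_drop]; exact hN
  have hdisj := (List.nodup_append.mp hsplit).2.2
  have hnot : e' ∉ L.take (i + 1) := fun hm => hdisj _ hm _ h' rfl
  rw [take_succ_of_get h] at hnot
  constructor
  · exact fun hm => hnot (List.mem_append_left _ hm)
  · exact fun hm => hnot (List.mem_append_right _ (hm ▸ List.mem_singleton_self e))

lemma accAt_facts (val : ν → HRHypergraph (σ ⊕ ν)) {g : HRHypergraph (σ ⊕ ν)} {i e : ℕ}
    (h : (ntEdgeList g)[i]? = some e) :
    e ∈ (accAt val g i).E ∧ (accAt val g i).att e = g.att e ∧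
      (accAt val g i).lab e = g.lab e := by
  have he : e ∈ g.E := (mem_ntEdgeList.mp (List.mem_of_getElem? h)).1
  exact foldl_preserve val _ g e he (Or.inr (not_mem_take (ntEdgeList_nodup g) h))

lemma expand_decomp (val : ν → HRHypergraph (σ ⊕ ν)) {g : HRHypergraph (σ ⊕ ν)} {i e : ℕ}
    (h : (ntEdgeList g)[i]? = some e) :
    (ntEdgeList g).foldl (stepF val) g =
      ((ntEdgeList g).drop (i + 1)).foldl (stepF val) (stepF val (accAt val g i) e) := by
  conv_lhs => rw [← List.take_append_drop (i + 1) (ntEdgeList g)]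
  rw [List.foldl_append, take_succ_of_get h, List.foldl_append]
  rfl

lemma accAt_decomp (val : ν → HRHypergraph (σ ⊕ ν)) {g : HRHypergraph (σ ⊕ ν)} {i i' e : ℕ}
    (h : (ntEdgeList g)[i]? = some e) (hlt : i < i') :
    accAt val g i' =
      (((ntEdgeList g).take i').drop (i + 1)).foldl (stepF val) (stepF val (accAt val g i) e) := by
  unfold accAt
  conv_lhs => rw [← List.take_append_drop (i + 1) ((ntEdgeList g).take i')]
  rw [List.take_take, min_eq_left (by omega : i + 1 ≤ i'), List.foldl_append,
    take_succ_of_get h, List.foldl_append]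
  rfl

lemma embed (val : ν → HRHypergraph (σ ⊕ ν)) {acc : HRHypergraph (σ ⊕ ν)} {e f₀ : ℕ} {B : ν}
    (he : e ∈ acc.E) (hB : acc.lab e = Sum.inr B) (hf0 : f₀ ∈ (val B).E) :
    (freshE acc + f₀) ∈ (stepF val acc e).E ∧
      (stepF val acc e).lab (freshE acc + f₀) = (val B).lab f₀ ∧
      (stepF val acc e).att (freshE acc + f₀) =
        ((val B).att f₀).map (renameVN acc e (val B) acc.V.card) := by
  have hs : stepF val acc e = replaceVN acc e (val B) acc.V.card := stepF_inr val hB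
  have hnot : freshE acc + f₀ ∉ acc.E.erase e := by
    intro hm
    have := mem_lt_freshE (Finset.mem_of_mem_erase hm)
    omega
  rw [hs]
  refine ⟨Finset.mem_union_right _ (Finset.mem_image.mpr ⟨f₀, hf0, rfl⟩), ?_, ?_⟩
  · show (if _ ∈ _ then _ else _) = _
    rw [if_neg hnot, Nat.add_sub_cancel_left]
  · show (if _ ∈ _ then _ else _) = _
    rw [if_neg hnot, Nat.add_sub_cancel_left]

variable (G : HRG σ ν) (val : ν → HRHypergraph (σ ⊕ ν)) (a : σ) (k : ℕ)

/-- Witness relation: `EW g u x f` says that the traversal from `x` with address `u`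
produces the edge `f` in `expandVal val g`. -/
inductive EW : HRHypergraph (σ ⊕ ν) → List ℕ → ℕ → ℕ → Prop
  | base {g : HRHypergraph (σ ⊕ ν)} {x f : ℕ}
      (hf : f ∈ g.E) (hlab : g.lab f = Sum.inl a) (hk : (g.att f)[k]? = some x) :
      EW g [] x f
  | step {g : HRHypergraph (σ ⊕ ν)} {x i e : ℕ} {B : ν} {j z : ℕ} {v : List ℕ} {f₀ : ℕ}
      (hi : (ntEdgeList g)[i]? = some e) (hB : g.lab e = Sum.inr B)
      (hx : (g.att e)[j]? = some x) (hz : (G.rhs B).ext[j]? = some z)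
      (hrec : EW (G.rhs B) v z f₀) :
      EW g (i :: v) x (freshE (accAt val g i) + f₀)

lemma traverse_EW {l : ℕ} {g : HRHypergraph (σ ⊕ ν)} {x : ℕ} {u : List ℕ} {y : ℕ}
    (h : TraverseRel G a k l g x u y) : ∃ f, EW G val a k g u x f := by
  induction h with
  | base he hlab hk => exact ⟨_, EW.base he hlab hk⟩
  | step hi hB hx hz hrec ih =>
    obtain ⟨f₀, hf₀⟩ := ih
    exact ⟨_, EW.step hi hB hx hz hf₀⟩

lemma EW_props (hWF : G.WF) (hval : G.ValFamily val) :
    ∀ {g : HRHypergraph (σ ⊕ ν)} {u : List ℕ} {x f : ℕ}, EW G val a k g u x f →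
      f ∈ (G.expandVal val g).E ∧ (G.expandVal val g).lab f = Sum.inl a ∧
        ((G.expandVal val g).att f)[k]? = some x := by
  intro g u x f h
  induction h with
  | base hf hlab hk =>
    rw [expandVal_eq]
    obtain ⟨h1, h2, h3⟩ := foldl_preserve val _ _ _ hf (Or.inl ⟨a, hlab⟩)
    exact ⟨h1, h3.trans hlab, by rw [h2]; exact hk⟩
  | @step g x i e B j z v f₀ hi hB hx hz hrec ih =>
    obtain ⟨heacc, hatt, hlabacc⟩ := accAt_facts val hi
    have hB' : (accAt val g i).lab e = Sum.inr B := hlabacc.trans hB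
    have hvalB : G.expandVal val (G.rhs B) = val B := (hval B).symm
    have ihE : f₀ ∈ (val B).E := by rw [← hvalB]; exact ih.1
    have ihL : (val B).lab f₀ = Sum.inl a := by rw [← hvalB]; exact ih.2.1
    have ihA : ((val B).att f₀)[k]? = some z := by rw [← hvalB]; exact ih.2.2
    obtain ⟨m1, m2, m3⟩ := embed val heacc hB' ihE
    have hextvB : (val B).ext = (G.rhs B).ext := by
      rw [← hvalB, expandVal_eq, foldl_ext]
    have hzmem : z ∈ (val B).ext := by
      rw [hextvB]; exact List.mem_of_getElem? hz
    have hextnodup : (G.rhs B).ext.Nodup := (hWF.2.2.1 B).2.2.2.2.2.2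
    have hidx : (val B).ext.idxOf z = j := by
      rw [hextvB]; exact indexOf_eq_of_nodup hextnodup hz
    have hρ : renameVN (accAt val g i) e (val B) (accAt val g i).V.card z = x := by
      unfold renameVN
      rw [if_pos hzmem, hidx, hatt, List.getD_eq_getElem?_getD, hx]
      rfl
    have hattk : ((stepF val (accAt val g i) e).att (freshE (accAt val g i) + f₀))[k]?
        = some x := by
      rw [m3, List.getElem?_map, ihA, Option.map_some, hρ]
    have hlabf : (stepF val (accAt val g i) e).lab (freshE (accAt val g i) + f₀)
        = Sum.inl a := m2.trans ihL
    rw [expandVal_eq, expand_decomp val hi]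
    obtain ⟨s1, s2, s3⟩ := foldl_preserve val _ _ _ m1 (Or.inl ⟨a, hlabf⟩)
    exact ⟨s1, s3.trans hlabf, by rw [s2]; exact hattk⟩

lemma EW_step_lt (hWF : G.WF) (hval : G.ValFamily val)
    {g : HRHypergraph (σ ⊕ ν)} {i e : ℕ} {B : ν} {z : ℕ} {v : List ℕ} {f₀ : ℕ}
    (hi : (ntEdgeList g)[i]? = some e) (hB : g.lab e = Sum.inr B)
    (hrec : EW G val a k (G.rhs B) v z f₀) {i' : ℕ} (hlt : i < i') :
    freshE (accAt val g i) + f₀ < freshE (accAt val g i') := by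
  obtain ⟨heacc, hatt, hlabacc⟩ := accAt_facts val hi
  have hB' : (accAt val g i).lab e = Sum.inr B := hlabacc.trans hB
  have hvalB : G.expandVal val (G.rhs B) = val B := (hval B).symm
  obtain ⟨ih1, ih2, _⟩ := EW_props G val a k hWF hval hrec
  have ihE : f₀ ∈ (val B).E := by rw [← hvalB]; exact ih1
  have ihL : (val B).lab f₀ = Sum.inl a := by rw [← hvalB]; exact ih2
  obtain ⟨m1, m2, _⟩ := embed val heacc hB' ihE
  have hlabf : (stepF val (accAt val g i) e).lab (freshE (accAt val g i) + f₀)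
      = Sum.inl a := m2.trans ihL
  have hmem : freshE (accAt val g i) + f₀ ∈ (accAt val g i').E := by
    rw [accAt_decomp val hi hlt]
    exact (foldl_preserve val _ _ _ m1 (Or.inl ⟨a, hlabf⟩)).1
  exact mem_lt_freshE hmem

lemma EW_base_lt (hWF : G.WF) (hval : G.ValFamily val)
    {g : HRHypergraph (σ ⊕ ν)} {f : ℕ}
    (hf : f ∈ g.E) (hlab : g.lab f = Sum.inl a) (i' : ℕ) :
    f < freshE (accAt val g i') :=
  mem_lt_freshE (foldl_preserve val _ g f hf (Or.inl ⟨a, hlab⟩)).1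

lemma EW_addr_inj (hWF : G.WF) (hval : G.ValFamily val) :
    ∀ {g : HRHypergraph (σ ⊕ ν)} {u : List ℕ} {x f : ℕ} {u' : List ℕ} {x' f' : ℕ},
      EW G val a k g u x f → EW G val a k g u' x' f' → f = f' → u = u' := by
  intro g u x f u' x' f' h1
  induction h1 generalizing u' x' f' with
  | base hf hlab hk =>
    intro h2 heq
    cases h2 with
    | base => rfl
    | @step _ _ i' e' B' j' z' v' f₀' hi' hB' hx' hz' hrec' =>
      exfalso
      have := EW_base_lt G val a hWF hval hf hlab i'
      omega
  | @step g x i e B j z v f₀ hi hB hx hz hrec ih =>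
    intro h2 heq
    cases h2 with
    | base hf' hlab' hk' =>
      exfalso
      have := EW_base_lt G val a hWF hval hf' hlab' i
      omega
    | @step _ x' i' e' B' j' z' v' f₀' hi' hB' hx' hz' hrec' =>
      rcases Nat.lt_trichotomy i i' with hlt | heqi | hgt
      · exfalso
        have := EW_step_lt G val a k hWF hval hi hB hrec hlt
        omega
      · subst heqi
        have hee : e = e' := by
          rw [hi] at hi'
          exact Option.some.inj hi'
        subst hee
        have hBB : B = B' := by
          rw [hB] at hB'
          exact Sum.inr.inj hB'
        subst hBB
        have hf0 : f₀ = f₀' := by omega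
        subst hf0
        rw [ih hrec' rfl]
      · exfalso
        have := EW_step_lt G val a k hWF hval hi' hB' hrec' hgt
        omega

lemma UL_descend (hWF : G.WF) (hval : G.ValFamily val) {g : HRHypergraph (σ ⊕ ν)}
    (hUL : (G.expandVal val g).UniqueLabeled) {e : ℕ} {A : ν}
    (he : e ∈ g.E) (hA : g.lab e = Sum.inr A) : (val A).UniqueLabeled := by
  obtain ⟨i, hi⟩ : ∃ i, (ntEdgeList g)[i]? = some e :=
    List.mem_iff_getElem?.mp (mem_ntEdgeList.mpr ⟨he, by rw [hA]; rfl⟩)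
  intro x b p f₁ h₁ f₂ h₂ hl1 hl2 ha1 ha2
  obtain ⟨heacc, hatt, hlabacc⟩ := accAt_facts val hi
  have hB' : (accAt val g i).lab e = Sum.inr A := hlabacc.trans hA
  obtain ⟨m11, m12, m13⟩ := embed val heacc hB' h₁
  obtain ⟨m21, m22, m23⟩ := embed val heacc hB' h₂
  set acc := accAt val g i with hacc
  have hni : ∀ f' : ℕ, (freshE acc + f') ∉ (ntEdgeList g).drop (i + 1) := by
    intro f' hmem
    obtain ⟨hnt, hne⟩ := mem_drop_props (ntEdgeList_nodup g) hi hmem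
    have hgE : (freshE acc + f') ∈ g.E :=
      (mem_ntEdgeList.mp (List.mem_of_mem_drop hmem)).1
    have : (freshE acc + f') ∈ acc.E :=
      (foldl_preserve val _ g _ hgE (Or.inr hnt)).1
    have := mem_lt_freshE this
    omega
  obtain ⟨s11, s12, s13⟩ := foldl_preserve val ((ntEdgeList g).drop (i + 1)) _ _ m11
    (Or.inr (hni f₁))
  obtain ⟨s21, s22, s23⟩ := foldl_preserve val ((ntEdgeList g).drop (i + 1)) _ _ m21
    (Or.inr (hni f₂))
  rw [expandVal_eq, expand_decomp val hi] at hUL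
  have key := hUL (renameVN acc e (val A) acc.V.card x) ((val A).lab f₁) p
    (freshE acc + f₁) s11 (freshE acc + f₂) s21
    (by rw [s13, m12])
    (by rw [s23, m22, hl2, ← hl1])
    (by rw [s12, m13, List.getElem?_map, ha1, Option.map_some])
    (by rw [s22, m23, List.getElem?_map, ha2, Option.map_some])
  omega

lemma UL_rtg (hWF : G.WF) (hval : G.ValFamily val) {A₀ A : ν}
    (hrt : Relation.ReflTransGen G.ntStep A₀ A)
    (h0 : (val A₀).UniqueLabeled) : (val A).UniqueLabeled := by
  induction hrt with
  | refl => exact h0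
  | tail hseg hstep ih =>
    obtain ⟨e', he', hl'⟩ := hstep
    refine UL_descend G val hWF hval ?_ he' hl'
    rw [← hval _]
    exact ih

lemma UL_val (hWF : G.WF) (hSL : G.SL) (hval : G.ValFamily val)
    (hUL : (G.expandVal val G.start).UniqueLabeled) (A : ν) :
    (val A).UniqueLabeled := by
  obtain ⟨_, hreach⟩ := hSL
  obtain ⟨A₀, ⟨e, he, hlab⟩, hrt⟩ := hreach A
  exact UL_rtg G val hWF hval hrt (UL_descend G val hWF hval hUL he hlab)

end StmtNine

end Aux

section Statements

open HRHypergraph HRG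

theorem stmt9 {σ ν : Type} [LinearOrder ν] (G : HRG σ ν) (hWF : G.WF) (hSL : G.SL)
    (val : ν → HRHypergraph (σ ⊕ ν)) (hval : G.ValFamily val)
    (hUL : (G.expandVal val G.start).UniqueLabeled)
    (root : Option ν) (x : ℕ) (a : σ) (k l l' : ℕ) (hll : l ≠ l')
    (u u' : List ℕ) (y y' : ℕ)
    (h1 : TraverseRel G a k l (G.graphOf root) x u y)
    (h2 : TraverseRel G a k l' (G.graphOf root) x u' y') :
    u = u' := by
  have hULg : (G.expandVal val (G.graphOf root)).UniqueLabeled := by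
    cases root with
    | none => exact hUL
    | some A =>
      have h := StmtNine.UL_val G val hWF hSL hval hUL A
      show (G.expandVal val (G.rhs A)).UniqueLabeled
      rw [← hval A]
      exact h
  obtain ⟨f, hw1⟩ := StmtNine.traverse_EW G val a k h1
  obtain ⟨f', hw2⟩ := StmtNine.traverse_EW G val a k h2
  obtain ⟨e1, l1, a1⟩ := StmtNine.EW_props G val a k hWF hval hw1
  obtain ⟨e2, l2, a2⟩ := StmtNine.EW_props G val a k hWF hval hw2
  have hff : f = f' := hULg x (Sum.inl a) k f e1 f' e2 l1 l2 a1 a2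
  exact StmtNine.EW_addr_inj G val a k hWF hval hw1 hw2 hff

end Statements
end

section
/- Let G be an SL HR grammar with start graph S of rank 0. For every node u of dt(S) and every external vertex x of g_u there exist a unique proper ancestor v of u in dt(S) and a unique internal vertex y of g_v such that x is identified with y (through the chain of external-vertex identifications) in the derivation of val(G); that is, the mapping internal(u,x) is totally defined on dt(S) and always yields an ancestor of u. -/
/-! Formalization of SL HR grammars (straight-line hyperedge replacement grammars),
their derivation trees, traversal, and tableaux data structures. -/

universe u v

section Statements

open HRHypergraph HRG

section Aux

variable {σ ν : Type} [LinearOrder ν]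

theorem aux_getElem?_of_mem {x : ℕ} {l : List ℕ} (h : x ∈ l) : ∃ i : ℕ, l[i]? = some x := by
  obtain ⟨i, hi, e⟩ := List.getElem_of_mem h
  exact ⟨i, by rw [List.getElem?_eq_getElem hi, e]⟩

theorem aux_nodup_getElem? {l : List ℕ} {i j x : ℕ} (h : l.Nodup)
    (h1 : l[i]? = some x) (h2 : l[j]? = some x) : i = j := by
  rw [List.getElem?_eq_some_iff] at h1 h2
  obtain ⟨hi, e1⟩ := h1; obtain ⟨hj, e2⟩ := h2
  exact h.getElem_inj_iff.mp (e1.trans e2.symm)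

theorem aux_concat_inj {u v : List ℕ} {i j : ℕ} (h : u ++ [i] = v ++ [j]) :
    u = v ∧ i = j := by
  have h2 := congrArg List.length h
  simp at h2
  have := List.append_inj h h2
  simpa using this

theorem mem_of_mem_ntEdgeList {g : HRHypergraph (σ ⊕ ν)} {e : ℕ}
    (h : e ∈ ntEdgeList g) : e ∈ g.E := by
  unfold ntEdgeList at h
  rw [List.mem_mergeSort, Finset.mem_sort] at h
  exact (Finset.mem_filter.mp h).1

theorem graphAt_concat (G : HRG σ ν) (g0 : HRHypergraph (σ ⊕ ν)) (u : List ℕ) (i : ℕ)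
    (gc : HRHypergraph (σ ⊕ ν)) :
    graphAt G g0 (u ++ [i]) = some gc ↔
      ∃ g, graphAt G g0 u = some g ∧ ∃ e, (ntEdgeList g)[i]? = some e ∧
        ∃ B, g.lab e = Sum.inr B ∧ gc = G.rhs B := by
  induction u generalizing g0 with
  | nil =>
    rw [List.nil_append]
    constructor
    · intro h
      unfold graphAt at h
      refine ⟨g0, rfl, ?_⟩
      cases he : (ntEdgeList g0)[i]? with
      | none => simp [he] at h
      | some e =>
        cases hl : g0.lab e with
        | inl a => simp [he, hl] at h
        | inr B =>
          simp only [he, hl] at h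
          refine ⟨e, rfl, B, hl, ?_⟩
          simpa [graphAt] using h.symm
    · rintro ⟨g, hg, e, he, B, hl, rfl⟩
      injection hg with hg; subst hg
      unfold graphAt
      simp only [he, hl]
      rfl
  | cons a u ih =>
    rw [List.cons_append]
    constructor
    · intro h
      unfold graphAt at h
      cases he : (ntEdgeList g0)[a]? with
      | none => simp [he] at h
      | some e =>
        cases hl : g0.lab e with
        | inl t => simp [he, hl] at h
        | inr B =>
          simp only [he, hl] at h
          obtain ⟨g, hg, rest⟩ := (ih (G.rhs B)).mp h
          refine ⟨g, ?_, rest⟩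
          unfold graphAt
          simp only [he, hl]
          exact hg
    · rintro ⟨g, hg, rest⟩
      unfold graphAt at hg ⊢
      cases he : (ntEdgeList g0)[a]? with
      | none => simp [he] at hg
      | some e =>
        cases hl : g0.lab e with
        | inl t => simp [he, hl] at hg
        | inr B =>
          simp only [he, hl] at hg ⊢
          exact (ih (G.rhs B)).mpr ⟨g, hg, rest⟩

theorem graphAt_WF (G : HRG σ ν) (hWF : G.WF) (g0 : HRHypergraph (σ ⊕ ν))
    (h0 : g0.WF G.rankL) : ∀ (u : List ℕ) (g : HRHypergraph (σ ⊕ ν)),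
    graphAt G g0 u = some g → g.WF G.rankL := by
  intro u
  induction u generalizing g0 with
  | nil =>
    intro g hg
    unfold graphAt at hg
    injection hg with hg; subst hg; exact h0
  | cons a u ih =>
    intro g hg
    unfold graphAt at hg
    cases he : (ntEdgeList g0)[a]? with
    | none => simp [he] at hg
    | some e =>
      cases hl : g0.lab e with
      | inl t => simp [he, hl] at hg
      | inr B =>
        simp only [he, hl] at hg
        exact ih (G.rhs B) (hWF.2.2.1 B) g hg

theorem exists_internal (G : HRG σ ν) (hWF : G.WF) :
    ∀ (u : List ℕ) (g : HRHypergraph (σ ⊕ ν)), graphAt G G.start u = some g →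
      ∀ x ∈ g.V, ∃ v z, InternalRel G G.start u x v z ∧ v <+: u ∧
        (x ∈ g.ext → v.length < u.length) ∧
        ∃ gv, graphAt G G.start v = some gv ∧ z ∈ gv.V ∧ z ∉ gv.ext := by
  intro u
  induction u using List.reverseRecOn with
  | nil =>
    intro g hg x hx
    have hgs : g = G.start := by
      unfold graphAt at hg; injection hg with hg; exact hg.symm
    have hext : x ∉ g.ext := by rw [hgs, hWF.2.2.2.2.2]; simp
    exact ⟨[], x, .refl hg hx hext, List.prefix_refl _, fun h => absurd h hext,
      g, hg, hx, hext⟩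
  | append_singleton u i ih =>
    intro gc hgc x hx
    by_cases hext : x ∈ gc.ext
    · obtain ⟨g, hg, e, he, B, hB, hgcB⟩ := (graphAt_concat G G.start u i gc).mp hgc
      obtain ⟨j, hj⟩ := aux_getElem?_of_mem hext
      have hgWF : g.WF G.rankL := graphAt_WF G hWF G.start hWF.2.2.2.2.1 u g hg
      have heE : e ∈ g.E := mem_of_mem_ntEdgeList (List.mem_of_getElem? he)
      have hlen : (g.att e).length = gc.ext.length := by
        rw [hgWF.2.2.2.1 e heE, hB, hgcB, hWF.2.2.2.1 B]
        rfl
      have hjlt : j < (g.att e).length := by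
        rw [hlen]
        exact (List.getElem?_eq_some_iff.mp hj).1
      have hy : (g.att e)[j]? = some (g.att e)[j] := List.getElem?_eq_getElem hjlt
      have hyV : (g.att e)[j] ∈ g.V := hgWF.2.1 e heE _ (List.getElem_mem hjlt)
      obtain ⟨v, z, hrel, hpre, _, gv, hgv, hzV, hzext⟩ := ih g hg _ hyV
      refine ⟨v, z, .up hg he hgc hj hy hrel, hpre.trans (u.prefix_append [i]),
        fun _ => lt_of_le_of_lt hpre.length_le (by simp), gv, hgv, hzV, hzext⟩
    · exact ⟨u ++ [i], x, .refl hgc hx hext, List.prefix_refl _,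
        fun h => absurd h hext, gc, hgc, hx, hext⟩

theorem internal_inv (G : HRG σ ν) {g0 : HRHypergraph (σ ⊕ ν)} {w : List ℕ} {x : ℕ}
    {v : List ℕ} {z : ℕ} (h : InternalRel G g0 w x v z) :
    (∃ g, graphAt G g0 w = some g ∧ x ∈ g.V ∧ x ∉ g.ext ∧ v = w ∧ z = x) ∨
    (∃ (u : List ℕ) (i j : ℕ) (g gc : HRHypergraph (σ ⊕ ν)) (e y : ℕ),
      w = u ++ [i] ∧ graphAt G g0 u = some g ∧
      (ntEdgeList g)[i]? = some e ∧ graphAt G g0 (u ++ [i]) = some gc ∧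
      gc.ext[j]? = some x ∧ (g.att e)[j]? = some y ∧ InternalRel G g0 u y v z) := by
  cases h with
  | refl hg hx hint => exact Or.inl ⟨_, hg, hx, hint, rfl, rfl⟩
  | @up u i x j g gc e y v z hg he hgc hx hy hrec =>
    exact Or.inr ⟨u, i, j, g, gc, e, y, rfl, hg, he, hgc, hx, hy, hrec⟩

theorem internal_unique (G : HRG σ ν) (hWF : G.WF) {u : List ℕ} {x : ℕ}
    {v z : _} (h1 : InternalRel G G.start u x v z) :
    ∀ {v' z'}, InternalRel G G.start u x v' z' → v = v' ∧ z = z' := by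
  induction h1 with
  | @refl w x g hg hx hint =>
    intro v' z' h2
    rcases internal_inv G h2 with ⟨g2, hg2, _, _, rfl, rfl⟩ | ⟨u2, i2, j2, g2, gc2, e2, y2, rfl, _, _, hgc2, hx2, _, _⟩
    · exact ⟨rfl, rfl⟩
    · rw [hg] at hgc2
      injection hgc2 with hgc2
      exact absurd (List.mem_of_getElem? (hgc2 ▸ hx2)) hint
  | @up u i x j g gc e y v z hg he hgc hx hy hrec ih =>
    intro v' z' h2
    rcases internal_inv G h2 with ⟨g2, hg2, _, hint2, _, _⟩ | ⟨u2, i2, j2, g2, gc2, e2, y2, heq, hg2, he2, hgc2, hx2, hy2, hrec2⟩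
    · rw [hgc] at hg2
      injection hg2 with hg2
      exact absurd (hg2 ▸ List.mem_of_getElem? hx) hint2
    · obtain ⟨rfl, rfl⟩ := aux_concat_inj heq.symm
      rw [hg] at hg2; injection hg2 with hg2; subst hg2
      rw [he] at he2; injection he2 with he2; subst he2
      rw [hgc] at hgc2; injection hgc2 with hgc2; subst hgc2
      have hnodup := (graphAt_WF G hWF G.start hWF.2.2.2.2.1 _ _ hgc).2.2.2.2.2.2
      have hjj : j = j2 := aux_nodup_getElem? hnodup hx hx2
      subst hjj
      rw [hy] at hy2; injection hy2 with hy2; subst hy2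
      exact ih hrec2

end Aux

theorem stmt10 {σ ν : Type} [LinearOrder ν] (G : HRG σ ν) (hWF : G.WF) (hSL : G.SL)
    (u : List ℕ) (g : HRHypergraph (σ ⊕ ν)) (hg : graphAt G G.start u = some g)
    (x : ℕ) (hx : x ∈ g.ext) :
    (∃! p : List ℕ × ℕ, InternalRel G G.start u x p.1 p.2) ∧
    ∀ v y, InternalRel G G.start u x v y →
      v <+: u ∧ v ≠ u ∧
      ∃ gv, graphAt G G.start v = some gv ∧ y ∈ gv.V ∧ y ∉ gv.ext := by
  have hgWF : g.WF G.rankL := graphAt_WF G hWF G.start hWF.2.2.2.2.1 u g hg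
  have hxV : x ∈ g.V := hgWF.2.2.2.2.2.1 x hx
  obtain ⟨v, z, hrel, hpre, hlt, gv, hgv, hzV, hzext⟩ :=
    exists_internal G hWF u g hg x hxV
  constructor
  · refine ⟨(v, z), hrel, ?_⟩
    rintro ⟨v', z'⟩ h'
    obtain ⟨h1, h2⟩ := internal_unique G hWF h' hrel
    exact Prod.ext h1 h2
  · intro v' y' h'
    obtain ⟨h1, h2⟩ := internal_unique G hWF h' hrel
    subst h1; subst h2
    refine ⟨hpre, ?_, gv, hgv, hzV, hzext⟩
    intro hvu
    exact absurd (congrArg List.length hvu) (Nat.ne_of_lt (hlt hx))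

end Statements
end

section
/- Consider the family of SL HR grammars G_n (n ≥ 1) with nonterminals A_1,…,A_n of rank 2, start graph S having three vertices 1,2,3 and two A_1-labeled edges with attachments (1,2) and (1,3), each rule A_i → g where g has vertices {1,2,3} with external sequence ext = (2,3), vertex 1 internal, and two A_{i+1}-labeled edges attached (2,3) and (2,1), and the rule for A_n analogous with both edges labeled by the terminal a of rank 2. Then the derivation tree dt(G_n) has exactly 2^n leaves, and the tableaux tab(u) modeling these 2^n leaves u (as defined by the tableau definition) are pairwise distinct; hence the number of distinct tableaux needed to model all leaves grows exponentially in the size of G_n, which is linear in n. -/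
/-! Formalization of SL HR grammars (straight-line hyperedge replacement grammars),
their derivation trees, traversal, and tableaux data structures. -/

universe u v

section Statements

open HRHypergraph HRG

section Aux
open HRHypergraph HRG

variable {n : ℕ}

lemma sort_pair : ({1, 2} : Finset ℕ).sort (· ≤ ·) = [1, 2] := by
  rw [Finset.sort_insert] <;> simp

lemma ntEdgeList_start (hn : 0 < n) : ntEdgeList ((starG n).start) = [1, 2] := by
  unfold ntEdgeList
  have h1 : ((starG n).start.E.filter (fun e => ((starG n).start.lab e).isRight = true)) = {1, 2} := by
    have : ∀ e ∈ (starG n).start.E, ((starG n).start.lab e).isRight = true := by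
      intro e _; simp [starG, dif_pos hn]
    rw [Finset.filter_true_of_mem this]; rfl
  rw [h1, sort_pair]
  simp [List.mergeSort, dtLE, starG, listLexLE, List.merge]

lemma ntEdgeList_rhs (i : Fin n) (h : i.val + 1 < n) :
    ntEdgeList ((starG n).rhs i) = [2, 1] := by
  unfold ntEdgeList
  have h1 : (((starG n).rhs i).E.filter (fun e => (((starG n).rhs i).lab e).isRight = true)) = {1, 2} := by
    have : ∀ e ∈ ((starG n).rhs i).E, (((starG n).rhs i).lab e).isRight = true := by
      intro e _; simp [starG, dif_pos h]
    rw [Finset.filter_true_of_mem this]; rfl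
  rw [h1, sort_pair]
  simp [List.mergeSort, dtLE, starG, listLexLE, List.merge]

lemma ntEdgeList_rhs_last (i : Fin n) (h : ¬ (i.val + 1 < n)) :
    ntEdgeList ((starG n).rhs i) = [] := by
  unfold ntEdgeList
  have h1 : (((starG n).rhs i).E.filter (fun e => (((starG n).rhs i).lab e).isRight = true)) = ∅ := by
    rw [Finset.filter_false_of_mem]
    intro e _; simp [starG, dif_neg h]
  rw [h1]
  simp

end Aux

section Aux2
open HRHypergraph HRG

variable {n : ℕ}

def bsF (n k : ℕ) (hn : 0 < n) (len : ℕ) : List (Fin n) :=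
  (List.range len).map (fun j => ⟨(k + 1 + j) % n, Nat.mod_lt _ hn⟩)

lemma bsF_succ (k : ℕ) (hn : 0 < n) (len : ℕ) :
    bsF n k hn (len + 1) = ⟨(k + 1) % n, Nat.mod_lt _ hn⟩ :: bsF n (k + 1) hn len := by
  unfold bsF
  rw [List.range_succ_eq_map, List.map_cons, List.map_map]
  congr 1
  apply List.map_congr_left
  intro j _
  simp only [Function.comp_apply, Fin.mk.injEq]
  congr 1
  omega

lemma ntSeq_rhs (hn : 0 < n) (u : List ℕ) : ∀ k (hk : k < n),
    ntSeq (starG n) ((starG n).rhs ⟨k, hk⟩) u =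
      if u.length + k + 1 ≤ n ∧ ∀ x ∈ u, x < 2 then some (bsF n k hn u.length) else none := by
  induction u with
  | nil =>
    intro k hk
    simp [ntSeq, bsF]
    omega
  | cons i u ih =>
    intro k hk
    by_cases h : k + 1 < n
    · have hlab : ∀ e, ((starG n).rhs ⟨k, hk⟩).lab e = Sum.inr ⟨k + 1, h⟩ := by
        intro e; simp [starG, dif_pos h]
      have hmk : (⟨k + 1, h⟩ : Fin n) = ⟨(k+1) % n, Nat.mod_lt _ hn⟩ := by
        simp [Fin.ext_iff, Nat.mod_eq_of_lt h]
      have key : ∀ e, e ∈ ({1, 2} : Finset ℕ) →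
          ntSeq (starG n) ((starG n).rhs ⟨k, hk⟩) (i :: u) =
            Option.map (fun Bs => (⟨k + 1, h⟩ : Fin n) :: Bs)
              (ntSeq (starG n) ((starG n).rhs ⟨k+1, h⟩) u) → True := fun _ _ _ => trivial
      clear key
      by_cases hc : u.length + (k + 1) + 1 ≤ n ∧ ∀ x ∈ u, x < 2
      · have hcc : ((i :: u).length + k + 1 ≤ n ∧ ∀ x ∈ i :: u, x < 2) ↔ i < 2 := by
          simp only [List.length_cons, List.mem_cons]
          constructor
          · intro hh
            exact hh.2 i (Or.inl rfl)
          · intro hi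
            refine ⟨by omega, ?_⟩
            rintro x (rfl | hx)
            · exact hi
            · exact hc.2 x hx
        match i with
        | 0 =>
          unfold ntSeq
          rw [ntEdgeList_rhs ⟨k, hk⟩ h]
          simp only [List.getElem?_cons_zero, hlab, ih (k+1) h, if_pos hc]
          rw [if_pos (hcc.2 (by omega))]
          simp only [Option.map_some, List.length_cons, bsF_succ, hmk]
        | 1 =>
          unfold ntSeq
          rw [ntEdgeList_rhs ⟨k, hk⟩ h]
          simp only [List.getElem?_cons_succ, List.getElem?_cons_zero, hlab, ih (k+1) h, if_pos hc]
          rw [if_pos (hcc.2 (by omega))]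
          simp only [Option.map_some, List.length_cons, bsF_succ, hmk]
        | (m+2) =>
          unfold ntSeq
          rw [ntEdgeList_rhs ⟨k, hk⟩ h]
          have : ([2, 1] : List ℕ)[m+2]? = none := by simp
          rw [this]
          rw [if_neg (by
            simp only [List.length_cons, not_and]
            intro _ hall
            have := hall (m+2) List.mem_cons_self
            omega)]
      · have hcc : ¬ ((i :: u).length + k + 1 ≤ n ∧ ∀ x ∈ i :: u, x < 2) := by
          intro hh
          have h1 := hh.1
          simp only [List.length_cons] at h1
          exact hc ⟨by omega, fun x hx => hh.2 x (List.mem_cons_of_mem _ hx)⟩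
        rw [if_neg hcc]
        match i with
        | 0 =>
          unfold ntSeq
          rw [ntEdgeList_rhs ⟨k, hk⟩ h]
          simp only [List.getElem?_cons_zero, hlab, ih (k+1) h, if_neg hc]
          rfl
        | 1 =>
          unfold ntSeq
          rw [ntEdgeList_rhs ⟨k, hk⟩ h]
          simp only [List.getElem?_cons_succ, List.getElem?_cons_zero, hlab, ih (k+1) h, if_neg hc]
          rfl
        | (m+2) =>
          unfold ntSeq
          rw [ntEdgeList_rhs ⟨k, hk⟩ h]
          have : ([2, 1] : List ℕ)[m+2]? = none := by simp
          rw [this]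
    · unfold ntSeq
      rw [ntEdgeList_rhs_last ⟨k, hk⟩ h]
      rw [if_neg (by simp only [List.length_cons, not_and]; intro h1; omega)]
      simp

end Aux2

section Aux3
open HRHypergraph HRG

variable {n : ℕ}

def bsS (n : ℕ) (hn : 0 < n) (len : ℕ) : List (Fin n) :=
  (List.range len).map (fun j => ⟨j % n, Nat.mod_lt _ hn⟩)

lemma bsS_succ (hn : 0 < n) (len : ℕ) :
    bsS n hn (len + 1) = ⟨0 % n, Nat.mod_lt _ hn⟩ :: bsF n 0 hn len := by
  unfold bsS bsF
  rw [List.range_succ_eq_map, List.map_cons, List.map_map]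
  congr 1
  apply List.map_congr_left
  intro j _
  simp only [Function.comp_apply, Fin.mk.injEq]
  congr 1
  omega

lemma ntSeq_start (hn : 0 < n) (u : List ℕ) :
    ntSeq (starG n) (starG n).start u =
      if u.length ≤ n ∧ ∀ x ∈ u, x < 2 then some (bsS n hn u.length) else none := by
  match u with
  | [] => simp [ntSeq, bsS]
  | (i :: u) =>
    have hlab : ∀ e, ((starG n).start).lab e = Sum.inr ⟨0, hn⟩ := by
      intro e; simp [starG, dif_pos hn]
    have hmk : (⟨0, hn⟩ : Fin n) = ⟨0 % n, Nat.mod_lt _ hn⟩ := by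
      simp [Fin.ext_iff, Nat.mod_eq_of_lt hn]
    by_cases hc : u.length + 0 + 1 ≤ n ∧ ∀ x ∈ u, x < 2
    · have hcc : ((i :: u).length ≤ n ∧ ∀ x ∈ i :: u, x < 2) ↔ i < 2 := by
        simp only [List.length_cons, List.mem_cons]
        constructor
        · intro hh
          exact hh.2 i (Or.inl rfl)
        · intro hi
          refine ⟨by omega, ?_⟩
          rintro x (rfl | hx)
          · exact hi
          · exact hc.2 x hx
      match i with
      | 0 =>
        unfold ntSeq
        rw [ntEdgeList_start hn]
        simp only [List.getElem?_cons_zero, hlab, ntSeq_rhs hn u 0 hn, if_pos hc]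
        rw [if_pos (hcc.2 (by omega))]
        simp only [Option.map_some, List.length_cons, bsS_succ, hmk]
      | 1 =>
        unfold ntSeq
        rw [ntEdgeList_start hn]
        simp only [List.getElem?_cons_succ, List.getElem?_cons_zero, hlab,
          ntSeq_rhs hn u 0 hn, if_pos hc]
        rw [if_pos (hcc.2 (by omega))]
        simp only [Option.map_some, List.length_cons, bsS_succ, hmk]
      | (m+2) =>
        unfold ntSeq
        rw [ntEdgeList_start hn]
        have : ([1, 2] : List ℕ)[m+2]? = none := by simp
        rw [this]
        rw [if_neg (by
          simp only [List.length_cons, not_and]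
          intro _ hall
          have := hall (m+2) List.mem_cons_self
          omega)]
    · have hcc : ¬ ((i :: u).length ≤ n ∧ ∀ x ∈ i :: u, x < 2) := by
        intro hh
        have h1 := hh.1
        simp only [List.length_cons] at h1
        exact hc ⟨by omega, fun x hx => hh.2 x (List.mem_cons_of_mem _ hx)⟩
      rw [if_neg hcc]
      match i with
      | 0 =>
        unfold ntSeq
        rw [ntEdgeList_start hn]
        simp only [List.getElem?_cons_zero, hlab, ntSeq_rhs hn u 0 hn, if_neg hc]
        rfl
      | 1 =>
        unfold ntSeq
        rw [ntEdgeList_start hn]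
        simp only [List.getElem?_cons_succ, List.getElem?_cons_zero, hlab,
          ntSeq_rhs hn u 0 hn, if_neg hc]
        rfl
      | (m+2) =>
        unfold ntSeq
        rw [ntEdgeList_start hn]
        have : ([1, 2] : List ℕ)[m+2]? = none := by simp
        rw [this]

lemma graphAt_rhs (hn : 0 < n) (u : List ℕ) : ∀ k (hk : k < n),
    graphAt (starG n) ((starG n).rhs ⟨k, hk⟩) u =
      if u.length + k + 1 ≤ n ∧ ∀ x ∈ u, x < 2 then
        some ((starG n).rhs ⟨(k + u.length) % n, Nat.mod_lt _ hn⟩) else none := by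
  induction u with
  | nil =>
    intro k hk
    rw [if_pos ⟨by simp only [List.length_nil]; omega, by simp⟩]
    simp only [graphAt, List.length_nil, Nat.add_zero, Nat.mod_eq_of_lt hk]
  | cons i u ih =>
    intro k hk
    by_cases h : k + 1 < n
    · have hlab : ∀ e, ((starG n).rhs ⟨k, hk⟩).lab e = Sum.inr ⟨k + 1, h⟩ := by
        intro e; simp [starG, dif_pos h]
      have harith : (k + (i :: u).length) % n = ((k + 1) + u.length) % n := by
        simp only [List.length_cons]; congr 1; omega
      by_cases hc : u.length + (k + 1) + 1 ≤ n ∧ ∀ x ∈ u, x < 2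
      · have hcc : ((i :: u).length + k + 1 ≤ n ∧ ∀ x ∈ i :: u, x < 2) ↔ i < 2 := by
          simp only [List.length_cons, List.mem_cons]
          constructor
          · intro hh
            exact hh.2 i (Or.inl rfl)
          · intro hi
            refine ⟨by omega, ?_⟩
            rintro x (rfl | hx)
            · exact hi
            · exact hc.2 x hx
        match i with
        | 0 =>
          unfold graphAt
          rw [ntEdgeList_rhs ⟨k, hk⟩ h]
          simp only [List.getElem?_cons_zero, hlab, ih (k+1) h, if_pos hc]
          rw [if_pos (hcc.2 (by omega))]
          simp only [List.length_cons]
          have harith2 : k + 1 + u.length = k + (u.length + 1) := by omega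
          rw [harith2]
        | 1 =>
          unfold graphAt
          rw [ntEdgeList_rhs ⟨k, hk⟩ h]
          simp only [List.getElem?_cons_succ, List.getElem?_cons_zero, hlab, ih (k+1) h, if_pos hc]
          rw [if_pos (hcc.2 (by omega))]
          simp only [List.length_cons]
          have harith2 : k + 1 + u.length = k + (u.length + 1) := by omega
          rw [harith2]
        | (m+2) =>
          unfold graphAt
          rw [ntEdgeList_rhs ⟨k, hk⟩ h]
          have : ([2, 1] : List ℕ)[m+2]? = none := by simp
          rw [this]
          rw [if_neg (by
            simp only [List.length_cons, not_and]
            intro _ hall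
            have := hall (m+2) List.mem_cons_self
            omega)]
      · have hcc : ¬ ((i :: u).length + k + 1 ≤ n ∧ ∀ x ∈ i :: u, x < 2) := by
          intro hh
          have h1 := hh.1
          simp only [List.length_cons] at h1
          exact hc ⟨by omega, fun x hx => hh.2 x (List.mem_cons_of_mem _ hx)⟩
        rw [if_neg hcc]
        match i with
        | 0 =>
          unfold graphAt
          rw [ntEdgeList_rhs ⟨k, hk⟩ h]
          simp only [List.getElem?_cons_zero, hlab, ih (k+1) h, if_neg hc]
        | 1 =>
          unfold graphAt
          rw [ntEdgeList_rhs ⟨k, hk⟩ h]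
          simp only [List.getElem?_cons_succ, List.getElem?_cons_zero, hlab, ih (k+1) h, if_neg hc]
        | (m+2) =>
          unfold graphAt
          rw [ntEdgeList_rhs ⟨k, hk⟩ h]
          have : ([2, 1] : List ℕ)[m+2]? = none := by simp
          rw [this]
    · unfold graphAt
      rw [ntEdgeList_rhs_last ⟨k, hk⟩ h]
      rw [if_neg (by simp only [List.length_cons, not_and]; intro h1; omega)]
      simp

lemma graphAt_start_cons (hn : 0 < n) (i : ℕ) (u : List ℕ) :
    graphAt (starG n) (starG n).start (i :: u) =
      if (i :: u).length ≤ n ∧ ∀ x ∈ i :: u, x < 2 then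
        some ((starG n).rhs ⟨u.length % n, Nat.mod_lt _ hn⟩) else none := by
  have hlab : ∀ e, ((starG n).start).lab e = Sum.inr ⟨0, hn⟩ := by
    intro e; simp [starG, dif_pos hn]
  by_cases hc : u.length + 0 + 1 ≤ n ∧ ∀ x ∈ u, x < 2
  · have hcc : ((i :: u).length ≤ n ∧ ∀ x ∈ i :: u, x < 2) ↔ i < 2 := by
      simp only [List.length_cons, List.mem_cons]
      constructor
      · intro hh
        exact hh.2 i (Or.inl rfl)
      · intro hi
        refine ⟨by omega, ?_⟩
        rintro x (rfl | hx)
        · exact hi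
        · exact hc.2 x hx
    match i with
    | 0 =>
      unfold graphAt
      rw [ntEdgeList_start hn]
      simp only [List.getElem?_cons_zero, hlab, graphAt_rhs hn u 0 hn, if_pos hc]
      rw [if_pos (hcc.2 (by omega))]
      simp
    | 1 =>
      unfold graphAt
      rw [ntEdgeList_start hn]
      simp only [List.getElem?_cons_succ, List.getElem?_cons_zero, hlab,
        graphAt_rhs hn u 0 hn, if_pos hc]
      rw [if_pos (hcc.2 (by omega))]
      simp
    | (m+2) =>
      unfold graphAt
      rw [ntEdgeList_start hn]
      have : ([1, 2] : List ℕ)[m+2]? = none := by simp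
      rw [this]
      rw [if_neg (by
        simp only [List.length_cons, not_and]
        intro _ hall
        have := hall (m+2) List.mem_cons_self
        omega)]
  · have hcc : ¬ ((i :: u).length ≤ n ∧ ∀ x ∈ i :: u, x < 2) := by
      intro hh
      have h1 := hh.1
      simp only [List.length_cons] at h1
      exact hc ⟨by omega, fun x hx => hh.2 x (List.mem_cons_of_mem _ hx)⟩
    rw [if_neg hcc]
    match i with
    | 0 =>
      unfold graphAt
      rw [ntEdgeList_start hn]
      simp only [List.getElem?_cons_zero, hlab, graphAt_rhs hn u 0 hn, if_neg hc]
    | 1 =>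
      unfold graphAt
      rw [ntEdgeList_start hn]
      simp only [List.getElem?_cons_succ, List.getElem?_cons_zero, hlab,
        graphAt_rhs hn u 0 hn, if_neg hc]
    | (m+2) =>
      unfold graphAt
      rw [ntEdgeList_start hn]
      have : ([1, 2] : List ℕ)[m+2]? = none := by simp
      rw [this]

end Aux3

section Aux4
open HRHypergraph HRG

variable {n : ℕ}

/-- The internal-vertex target for the second external vertex (vertex 3), computed on
the reversed address. -/
def tgtR : List ℕ → List ℕ × ℕ
  | [] => ([], 3)
  | x :: w => if x = 0 then (if w = [] then ([], 2) else (w.reverse, 1)) else tgtR w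

lemma tgtR_cons0 (w : List ℕ) :
    tgtR (0 :: w) = if w = [] then ([], 2) else (w.reverse, 1) := by
  simp [tgtR]

lemma tgtR_cons1 (w : List ℕ) : tgtR (1 :: w) = tgtR w := by
  simp [tgtR]

lemma tgtR_len : ∀ l : List ℕ, l ≠ [] → (tgtR l).1.length < l.length := by
  intro l
  induction l with
  | nil => intro h; exact absurd rfl h
  | cons x w ih =>
    intro _
    by_cases hx : x = 0
    · subst hx
      rw [tgtR_cons0]
      by_cases hw : w = []
      · simp [hw]
      · simp [hw]
    · show (tgtR (x :: w)).1.length < w.length + 1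
      have : tgtR (x :: w) = tgtR w := by simp [tgtR, hx]
      rw [this]
      by_cases hw : w = []
      · subst hw; simp [tgtR]
      · exact Nat.lt_trans (ih hw) (Nat.lt_succ_self _)

/-- The full internal-vertex specification. -/
def spec (u : List ℕ) (x : ℕ) : List ℕ × ℕ :=
  if u = [] then (u, x) else if x = 1 then (u, 1) else if x = 2 then ([], 1) else tgtR u.reverse

lemma graphAt_start_nil : graphAt (starG n) (starG n).start [] = some (starG n).start := rfl

lemma graphAt_start_some (hn : 0 < n) {u : List ℕ} {g : HRHypergraph (Unit ⊕ Fin n)}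
    (h : graphAt (starG n) (starG n).start u = some g) :
    (u.length ≤ n ∧ ∀ x ∈ u, x < 2) ∧
      ((u = [] ∧ g = (starG n).start) ∨
        (u ≠ [] ∧ g = (starG n).rhs ⟨(u.length - 1) % n, Nat.mod_lt _ hn⟩)) := by
  match u with
  | [] =>
    rw [graphAt_start_nil] at h
    exact ⟨⟨by simp, by simp⟩, Or.inl ⟨rfl, (Option.some_injective _ h).symm⟩⟩
  | (i :: u') =>
    rw [graphAt_start_cons hn] at h
    by_cases hc : (i :: u').length ≤ n ∧ ∀ x ∈ i :: u', x < 2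
    · rw [if_pos hc] at h
      refine ⟨hc, Or.inr ⟨by simp, ?_⟩⟩
      have : (i :: u').length - 1 = u'.length := by simp
      rw [this]
      exact (Option.some_injective _ h).symm
    · rw [if_neg hc] at h
      exact absurd h (by simp)

lemma ext23 {j x : ℕ} (h : ([2, 3] : List ℕ)[j]? = some x) :
    (j = 0 ∧ x = 2) ∨ (j = 1 ∧ x = 3) := by
  match j with
  | 0 => exact Or.inl ⟨rfl, by simpa using h.symm⟩
  | 1 => exact Or.inr ⟨rfl, by simpa using h.symm⟩
  | (m+2) => simp at h

theorem internal_spec (hn : 0 < n) {u : List ℕ} {x : ℕ} {v : List ℕ} {z : ℕ}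
    (h : InternalRel (starG n) (starG n).start u x v z) : (v, z) = spec u x := by
  induction h with
  | refl hg hx hint =>
    rename_i u' x' g
    rcases graphAt_start_some hn hg with ⟨hval, hcase⟩
    rcases hcase with ⟨hnl, rfl⟩ | ⟨hne, rfl⟩
    · subst hnl
      simp [spec]
    · have hext : ((starG n).rhs ⟨(u'.length - 1) % n, Nat.mod_lt _ hn⟩).ext = [2, 3] := rfl
      have hV : ((starG n).rhs ⟨(u'.length - 1) % n, Nat.mod_lt _ hn⟩).V = {1, 2, 3} := rfl
      rw [hV] at hx
      rw [hext] at hint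
      have hx1 : x' = 1 := by
        simp only [Finset.mem_insert, Finset.mem_singleton] at hx
        simp only [List.mem_cons, List.mem_singleton] at hint
        rcases hx with rfl | rfl | rfl
        · rfl
        · exact absurd (by simp) hint
        · exact absurd (by simp) hint
      subst hx1
      simp [spec, hne]
  | up hg he hgc hx hy hrec ih =>
    rename_i u' i x' j g gc e y v' z'
    rcases graphAt_start_some hn hgc with ⟨hvalc, hcasec⟩
    rcases hcasec with ⟨habs, _⟩ | ⟨-, rfl⟩
    · exact absurd habs (by simp)
    have hx23 := ext23 (by rw [← hx]; rfl)
    have hi2 : i < 2 := hvalc.2 i (by simp)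
    rcases graphAt_start_some hn hg with ⟨hval, hcase⟩
    rcases hcase with ⟨hnl, rfl⟩ | ⟨hne, rfl⟩
    · -- parent is the start graph
      subst hnl
      rw [ntEdgeList_start hn] at he
      have hatt : ∀ e', (starG n).start.att e' = if e' = 1 then [1, 2] else [1, 3] := fun _ => rfl
      match i, hi2 with
      | 0, _ =>
        have he' : e = 1 := by simpa using he.symm
        subst he'
        rw [hatt 1, if_pos rfl] at hy
        rcases hx23 with ⟨rfl, rfl⟩ | ⟨rfl, rfl⟩
        · have hy' : y = 1 := by simpa using hy.symm
          subst hy'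
          rw [ih]
          simp [spec]
        · have hy' : y = 2 := by simpa using hy.symm
          subst hy'
          rw [ih]
          simp [spec, tgtR_cons0]
      | 1, _ =>
        have he' : e = 2 := by simpa using he.symm
        subst he'
        rw [hatt 2, if_neg (by omega)] at hy
        rcases hx23 with ⟨rfl, rfl⟩ | ⟨rfl, rfl⟩
        · have hy' : y = 1 := by simpa using hy.symm
          subst hy'
          rw [ih]
          simp [spec]
        · have hy' : y = 3 := by simpa using hy.symm
          subst hy'
          rw [ih]
          simp [spec, tgtR, tgtR_cons1]
    · -- parent is a right-hand side
      have hlen1 : 1 ≤ u'.length := by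
        rcases u' with _ | _
        · exact absurd rfl hne
        · simp
      have hkk : (u'.length - 1) % n + 1 < n := by
        have h1 := hvalc.1
        rw [List.length_append, List.length_singleton] at h1
        rw [Nat.mod_eq_of_lt (by omega)]
        omega
      rw [ntEdgeList_rhs _ hkk] at he
      have hatt : ∀ e', ((starG n).rhs (⟨(u'.length - 1) % n, Nat.mod_lt _ hn⟩ : Fin n)).att e'
          = if e' = 1 then [2, 3] else [2, 1] := fun _ => rfl
      have hrevne : u'.reverse ≠ [] := by simpa using hne
      match i, hi2 with
      | 0, _ =>
        have he' : e = 2 := by simpa using he.symm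
        subst he'
        rw [hatt 2, if_neg (by omega)] at hy
        rcases hx23 with ⟨rfl, rfl⟩ | ⟨rfl, rfl⟩
        · have hy' : y = 2 := by simpa using hy.symm
          subst hy'
          rw [ih]
          simp [spec, hne]
        · have hy' : y = 1 := by simpa using hy.symm
          subst hy'
          rw [ih]
          simp [spec, hne, tgtR_cons0]
      | 1, _ =>
        have he' : e = 1 := by simpa using he.symm
        subst he'
        rw [hatt 1, if_pos rfl] at hy
        rcases hx23 with ⟨rfl, rfl⟩ | ⟨rfl, rfl⟩
        · have hy' : y = 2 := by simpa using hy.symm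
          subst hy'
          rw [ih]
          simp [spec, hne]
        · have hy' : y = 3 := by simpa using hy.symm
          subst hy'
          rw [ih]
          simp [spec, hne, tgtR_cons1]

end Aux4

section Aux5
open HRHypergraph HRG

variable {n : ℕ}

lemma graphAt_start_eq (hn : 0 < n) (u : List ℕ) (hlen : u.length ≤ n)
    (hval : ∀ x ∈ u, x < 2) (hne : u ≠ []) :
    graphAt (starG n) (starG n).start u =
      some ((starG n).rhs ⟨(u.length - 1) % n, Nat.mod_lt _ hn⟩) := by
  match u with
  | [] => exact absurd rfl hne
  | (i :: t) =>
    rw [graphAt_start_cons hn, if_pos ⟨hlen, hval⟩]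
    simp

theorem internal_exists (hn : 0 < n) (u : List ℕ) :
    u.length ≤ n → (∀ x ∈ u, x < 2) → u ≠ [] →
    InternalRel (starG n) (starG n).start u 2 [] 1 ∧
    InternalRel (starG n) (starG n).start u 3 (tgtR u.reverse).1 (tgtR u.reverse).2 := by
  induction u using List.reverseRecOn with
  | nil => intro _ _ h; exact absurd rfl h
  | append_singleton w i ih =>
    intro hlen hval _
    have hi : i < 2 := hval i (by simp)
    have hlenw1 : w.length + 1 ≤ n := by simpa using hlen
    have hlenw : w.length ≤ n := by omega
    have hvalw : ∀ x ∈ w, x < 2 := fun x hx => hval x (by simp [hx])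
    have hne2 : w ++ [i] ≠ [] := by simp
    have hgc := graphAt_start_eq hn (w ++ [i]) (by simpa using hlen) hval hne2
    have hextgc : ((starG n).rhs
        (⟨((w ++ [i]).length - 1) % n, Nat.mod_lt _ hn⟩ : Fin n)).ext = [2, 3] := rfl
    by_cases hw : w = []
    · subst hw
      have hg : graphAt (starG n) (starG n).start [] = some (starG n).start := rfl
      have hV : (starG n).start.V = {1, 2, 3} := rfl
      have hrec1 : InternalRel (starG n) (starG n).start [] 1 [] 1 :=
        InternalRel.refl hg (by rw [hV]; simp) (by simp [starG])
      have hrec2 : InternalRel (starG n) (starG n).start [] 2 [] 2 :=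
        InternalRel.refl hg (by rw [hV]; simp) (by simp [starG])
      have hrec3 : InternalRel (starG n) (starG n).start [] 3 [] 3 :=
        InternalRel.refl hg (by rw [hV]; simp) (by simp [starG])
      have hatt : ∀ e', (starG n).start.att e' = if e' = 1 then [1, 2] else [1, 3] :=
        fun _ => rfl
      have hel := ntEdgeList_start (n := n) hn
      match i, hi with
      | 0, _ =>
        constructor
        · exact InternalRel.up (e := 1) (j := 0) hg (by rw [hel]; simp) hgc
            (by rw [hextgc]; simp) (by rw [hatt 1, if_pos rfl]; simp) hrec1
        · have : tgtR ((([] : List ℕ) ++ [0]).reverse) = ([], 2) := by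
            simp [tgtR_cons0]
          rw [this]
          exact InternalRel.up (e := 1) (j := 1) hg (by rw [hel]; simp) hgc
            (by rw [hextgc]; simp) (by rw [hatt 1, if_pos rfl]; simp) hrec2
      | 1, _ =>
        constructor
        · exact InternalRel.up (e := 2) (j := 0) hg (by rw [hel]; simp) hgc
            (by rw [hextgc]; simp) (by rw [hatt 2, if_neg (by omega)]; simp) hrec1
        · have : tgtR ((([] : List ℕ) ++ [1]).reverse) = ([], 3) := by
            simp [tgtR, tgtR_cons1]
          rw [this]
          exact InternalRel.up (e := 2) (j := 1) hg (by rw [hel]; simp) hgc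
            (by rw [hextgc]; simp) (by rw [hatt 2, if_neg (by omega)]; simp) hrec3
    · have hlen1 : 1 ≤ w.length := by
        match w with
        | [] => exact absurd rfl hw
        | (_ :: _) => simp
      have hg := graphAt_start_eq hn w hlenw hvalw hw
      have hkk : (w.length - 1) % n + 1 < n := by
        rw [Nat.mod_eq_of_lt (by omega)]
        omega
      have hel := ntEdgeList_rhs (⟨(w.length - 1) % n, Nat.mod_lt _ hn⟩ : Fin n) hkk
      have hatt : ∀ e', ((starG n).rhs
          (⟨(w.length - 1) % n, Nat.mod_lt _ hn⟩ : Fin n)).att e'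
          = if e' = 1 then [2, 3] else [2, 1] := fun _ => rfl
      have hVr : ((starG n).rhs
          (⟨(w.length - 1) % n, Nat.mod_lt _ hn⟩ : Fin n)).V = {1, 2, 3} := rfl
      have hextr : ((starG n).rhs
          (⟨(w.length - 1) % n, Nat.mod_lt _ hn⟩ : Fin n)).ext = [2, 3] := rfl
      have hrec1 : InternalRel (starG n) (starG n).start w 1 w 1 :=
        InternalRel.refl hg (by rw [hVr]; simp) (by rw [hextr]; simp)
      have hrevne : w.reverse ≠ [] := by simpa using hw
      have hih := ih hlenw hvalw hw
      match i, hi with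
      | 0, _ =>
        constructor
        · exact InternalRel.up (e := 2) (j := 0) hg (by rw [hel]; simp) hgc
            (by rw [hextgc]; simp) (by rw [hatt 2, if_neg (by omega)]; simp) hih.1
        · have : tgtR ((w ++ [0]).reverse) = (w, 1) := by
            rw [List.reverse_append]
            simp [tgtR_cons0, hrevne]
          rw [this]
          exact InternalRel.up (e := 2) (j := 1) hg (by rw [hel]; simp) hgc
            (by rw [hextgc]; simp) (by rw [hatt 2, if_neg (by omega)]; simp) hrec1
      | 1, _ =>
        constructor
        · exact InternalRel.up (e := 1) (j := 0) hg (by rw [hel]; simp) hgc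
            (by rw [hextgc]; simp) (by rw [hatt 1, if_pos rfl]; simp) hih.1
        · have : tgtR ((w ++ [1]).reverse) = tgtR w.reverse := by
            rw [List.reverse_append]
            simp [tgtR_cons1]
          rw [this]
          exact InternalRel.up (e := 1) (j := 1) hg (by rw [hel]; simp) hgc
            (by rw [hextgc]; simp) (by rw [hatt 1, if_pos rfl]; simp) hih.2

end Aux5

section Aux6
open HRHypergraph HRG

variable {n : ℕ}

/-- The tableau modeling the path to the leaf `u` of the derivation tree of `starG n`. -/
def leafTab (n : ℕ) (iN : Fin n → ℕ) (u : List ℕ) : Tableau (Fin n) where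
  rows := n + 1
  cols := 2 * n + 2
  nt := fun i => if h : 1 ≤ i ∧ i ≤ n then some ⟨(i - 1) % n, Nat.mod_lt _ (by omega)⟩ else none
  first := fun i => firstAux (starG n) iN (starG n).start (u.take i)
  off := 0
  vtx := fun r c =>
    if 1 ≤ c / 2 ∧ c / 2 ≤ n then
      (if c % 2 = 0 then (if r = 0 then 1 else 0)
       else (if r = (tgtR ((u.take (c / 2)).reverse)).1.length
             then (tgtR ((u.take (c / 2)).reverse)).2 else 0))
    else 0
  nxt := fun r c =>
    if 1 ≤ r ∧ r ≤ n ∧ c < 2 then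
      (if c = 0 then some (0, 2 * r)
       else some ((tgtR ((u.take r).reverse)).1.length, 2 * r + 1))
    else none

lemma take_reverse_ne (hn : 0 < n) {u : List ℕ} (hlen : u.length = n) {i : ℕ} (hi1 : 1 ≤ i) :
    (u.take i).reverse ≠ [] := by
  intro h
  have h2 := congrArg List.length h
  rw [List.length_reverse, List.length_take, List.length_nil] at h2
  omega

lemma leafL_lt (hn : 0 < n) {u : List ℕ} (hlen : u.length = n) {i : ℕ}
    (hi1 : 1 ≤ i) (hi2 : i ≤ n) :
    (tgtR ((u.take i).reverse)).1.length < i := by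
  have h := tgtR_len _ (take_reverse_ne hn hlen hi1)
  rw [List.length_reverse, List.length_take] at h
  omega

lemma leafTab_nxt0 (iN : Fin n → ℕ) (u : List ℕ) {i : ℕ} (hi1 : 1 ≤ i) (hi2 : i ≤ n) :
    (leafTab n iN u).nxt i 0 = some (0, 2 * i) := by
  show (if 1 ≤ i ∧ i ≤ n ∧ (0:ℕ) < 2 then _ else _) = _
  rw [if_pos ⟨hi1, hi2, by omega⟩, if_pos rfl]

lemma leafTab_nxt1 (iN : Fin n → ℕ) (u : List ℕ) {i : ℕ} (hi1 : 1 ≤ i) (hi2 : i ≤ n) :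
    (leafTab n iN u).nxt i 1 = some ((tgtR ((u.take i).reverse)).1.length, 2 * i + 1) := by
  show (if 1 ≤ i ∧ i ≤ n ∧ (1:ℕ) < 2 then _ else _) = _
  rw [if_pos ⟨hi1, hi2, by omega⟩, if_neg (by omega)]

lemma leafTab_fv0 (iN : Fin n → ℕ) (u : List ℕ) {i : ℕ} (hi1 : 1 ≤ i) (hi2 : i ≤ n) :
    (leafTab n iN u).findVertex i 0 = some (0, 2 * i) := by
  unfold Tableau.findVertex
  rw [leafTab_nxt0 iN u hi1 hi2]
  simp only [if_pos (by omega : 0 ≤ i)]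

lemma leafTab_fv1 (hn : 0 < n) (iN : Fin n → ℕ) {u : List ℕ} (hlen : u.length = n) {i : ℕ}
    (hi1 : 1 ≤ i) (hi2 : i ≤ n) :
    (leafTab n iN u).findVertex i 1 =
      some ((tgtR ((u.take i).reverse)).1.length, 2 * i + 1) := by
  unfold Tableau.findVertex
  rw [leafTab_nxt1 iN u hi1 hi2]
  have := leafL_lt hn hlen hi1 hi2
  simp only [if_pos (by omega : (tgtR ((u.take i).reverse)).1.length ≤ i)]

lemma leafTab_fv_none (iN : Fin n → ℕ) (u : List ℕ) {i j : ℕ}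
    (h : ¬ (1 ≤ i ∧ i ≤ n ∧ j < 2)) :
    (leafTab n iN u).findVertex i j = none := by
  unfold Tableau.findVertex
  have : (leafTab n iN u).nxt i j = none := by
    show (if 1 ≤ i ∧ i ≤ n ∧ j < 2 then _ else _) = _
    rw [if_neg h]
  rw [this]

lemma leafTab_vtx_even (iN : Fin n → ℕ) (u : List ℕ) {i : ℕ} (hi1 : 1 ≤ i) (hi2 : i ≤ n) :
    (leafTab n iN u).vtx 0 (2 * i) = 1 := by
  show (if 1 ≤ 2 * i / 2 ∧ 2 * i / 2 ≤ n then _ else _) = _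
  have h2 : 2 * i / 2 = i := by omega
  rw [if_pos (by omega), if_pos (by omega), if_pos rfl]

lemma leafTab_vtx_odd (iN : Fin n → ℕ) (u : List ℕ) {i : ℕ} (hi1 : 1 ≤ i) (hi2 : i ≤ n) :
    (leafTab n iN u).vtx (tgtR ((u.take i).reverse)).1.length (2 * i + 1) =
      (tgtR ((u.take i).reverse)).2 := by
  show (if 1 ≤ (2 * i + 1) / 2 ∧ (2 * i + 1) / 2 ≤ n then _ else _) = _
  have h2 : (2 * i + 1) / 2 = i := by omega
  rw [if_pos (by omega), if_neg (by omega), h2, if_pos rfl]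

lemma leaf_models (hn : 0 < n) (iN : Fin n → ℕ) (u : List ℕ) (hlen : u.length = n)
    (hval : ∀ x ∈ u, x < 2) :
    Models (starG n) iN none u (leafTab n iN u) := by
  have hvalt : ∀ i, ∀ x ∈ u.take i, x < 2 := fun i x hx => hval x (List.mem_of_mem_take hx)
  have hlent : ∀ i, i ≤ n → (u.take i).length = i := by
    intro i hi
    rw [List.length_take]
    omega
  have htake_ne : ∀ i, 1 ≤ i → i ≤ n → u.take i ≠ [] := by
    intro i h1 h2 h
    have := hlent i h2
    rw [h] at this
    simp at this
    omega
  have hGAt : ∀ i, 1 ≤ i → i ≤ n →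
      graphAt (starG n) (starG n).start (u.take i) =
        some ((starG n).rhs ⟨((u.take i).length - 1) % n, Nat.mod_lt _ hn⟩) :=
    fun i h1 h2 => graphAt_start_eq hn _ (by rw [hlent i h2]; omega) (hvalt i) (htake_ne i h1 h2)
  refine ⟨?_, by simp [leafTab, hlen], rfl, ?_⟩
  · -- ModelsUpTo
    refine ⟨bsS n hn n, ?_, by rw [hlen], by simp [leafTab, hlen], ?_, ?_, ?_⟩
    · rw [show (starG n).graphOf none = (starG n).start from rfl,
        ntSeq_start hn u, if_pos ⟨by omega, hval⟩, hlen]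
    · -- nt
      intro i hi
      rw [hlen] at hi
      match i with
      | 0 =>
        simp only [leafTab]
        rw [dif_neg (by omega)]
        rfl
      | (k+1) =>
        simp only [leafTab]
        rw [dif_pos ⟨by omega, by omega⟩]
        show _ = ((bsS n hn n).map some).getD k none
        rw [List.getD_eq_getElem?_getD]
        have hk : k < n := by omega
        have : ((bsS n hn n).map some)[k]? = some (some ⟨k % n, Nat.mod_lt _ hn⟩) := by
          simp [bsS, List.getElem?_map, List.getElem?_range, hk]
        rw [this]
        simp
    · -- first
        intro i hi
        show firstAux (starG n) iN (starG n).start (u.take i) + 0 = _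
        rw [Nat.add_zero]
        rfl
    · -- main condition
      intro i hi gi hgi j y hjy
      rw [show (starG n).graphOf none = (starG n).start from rfl] at hgi ⊢
      rw [hlen] at hi
      match i with
      | 0 =>
        rw [List.take_zero] at hgi
        have : gi = (starG n).start := by
          rw [graphAt_start_nil] at hgi
          exact (Option.some_injective _ hgi).symm
        subst this
        have : (starG n).start.ext = [] := rfl
        rw [this] at hjy
        simp at hjy
      | (i+1) =>
        have hi1 : 1 ≤ i + 1 := by omega
        have hi2 : i + 1 ≤ n := by omega
        rw [hGAt (i+1) hi1 hi2] at hgi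
        have hgi' : gi = (starG n).rhs ⟨((u.take (i+1)).length - 1) % n, Nat.mod_lt _ hn⟩ :=
          (Option.some_injective _ hgi).symm
        subst hgi'
        have hext : ((starG n).rhs
            (⟨((u.take (i+1)).length - 1) % n, Nat.mod_lt _ hn⟩ : Fin n)).ext = [2, 3] := rfl
        rw [hext] at hjy
        have hEx := internal_exists hn (u.take (i+1)) (by rw [hlent _ hi2]; omega)
          (hvalt _) (htake_ne _ hi1 hi2)
        rcases ext23 hjy with ⟨rfl, rfl⟩ | ⟨rfl, rfl⟩
        · -- j = 0, y = 2
          refine ⟨?_, ?_, ?_⟩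
          · intro v z hvz
            have hs := internal_spec hn hvz
            rw [spec, if_neg (htake_ne _ hi1 hi2), if_neg (by omega), if_pos rfl] at hs
            have hv : v = [] := congrArg Prod.fst hs
            have hz : z = 1 := congrArg Prod.snd hs
            subst hv; subst hz
            exact ⟨2 * (i+1), by rw [leafTab_fv0 iN u hi1 hi2]; rfl,
              leafTab_vtx_even iN u hi1 hi2⟩
          · intro hno
            exact absurd ⟨[], 1, hEx.1⟩ hno
          · apply iff_of_true
            · intro p hp
              rw [leafTab_nxt0 iN u hi1 hi2] at hp
              have : p = (0, 2 * (i+1)) := by simpa using hp.symm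
              subst this
              omega
            · rintro ⟨i', j', hii', him, hjc, hfv⟩
              rw [leafTab_fv0 iN u hi1 hi2] at hfv
              have hi'2 : i' ≤ n := by omega
              have hi'1 : 1 ≤ i' := by omega
              match j' with
              | 0 =>
                rw [leafTab_fv0 iN u hi'1 hi'2] at hfv
                have : 2 * i' = 2 * (i + 1) := by
                  have := (Option.some_injective _ hfv)
                  exact congrArg Prod.snd this
                omega
              | 1 =>
                rw [leafTab_fv1 hn iN hlen hi'1 hi'2] at hfv
                have : 2 * i' + 1 = 2 * (i + 1) := by
                  have := (Option.some_injective _ hfv)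
                  exact congrArg Prod.snd this
                omega
              | (m+2) =>
                rw [leafTab_fv_none iN u (by omega)] at hfv
                cases hfv
        · -- j = 1, y = 3
          refine ⟨?_, ?_, ?_⟩
          · intro v z hvz
            have hs := internal_spec hn hvz
            rw [spec, if_neg (htake_ne _ hi1 hi2), if_neg (by omega), if_neg (by omega)] at hs
            have hv : v = (tgtR ((u.take (i+1)).reverse)).1 := congrArg Prod.fst hs
            have hz : z = (tgtR ((u.take (i+1)).reverse)).2 := congrArg Prod.snd hs
            subst hv; subst hz
            exact ⟨2 * (i+1) + 1, by rw [leafTab_fv1 hn iN hlen hi1 hi2],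
              leafTab_vtx_odd iN u hi1 hi2⟩
          · intro hno
            exact absurd ⟨_, _, hEx.2⟩ hno
          · apply iff_of_true
            · intro p hp
              rw [leafTab_nxt1 iN u hi1 hi2] at hp
              have hp' : p = ((tgtR ((u.take (i+1)).reverse)).1.length, 2 * (i+1) + 1) := by
                simpa using hp.symm
              subst hp'
              have := leafL_lt hn hlen hi1 hi2
              simp only []
              omega
            · rintro ⟨i', j', hii', him, hjc, hfv⟩
              rw [leafTab_fv1 hn iN hlen hi1 hi2] at hfv
              have hi'2 : i' ≤ n := by omega
              have hi'1 : 1 ≤ i' := by omega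
              match j' with
              | 0 =>
                rw [leafTab_fv0 iN u hi'1 hi'2] at hfv
                have : 2 * i' = 2 * (i + 1) + 1 := by
                  have := (Option.some_injective _ hfv)
                  exact congrArg Prod.snd this
                omega
              | 1 =>
                rw [leafTab_fv1 hn iN hlen hi'1 hi'2] at hfv
                have : 2 * i' + 1 = 2 * (i + 1) + 1 := by
                  have := (Option.some_injective _ hfv)
                  exact congrArg Prod.snd this
                omega
              | (m+2) =>
                rw [leafTab_fv_none iN u (by omega)] at hfv
                cases hfv
  · -- out of range
    intro i j hij
    constructor
    · show (if 1 ≤ i ∧ i ≤ n ∧ j < 2 then _ else _) = _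
      rw [if_neg (by
        simp only [leafTab] at hij
        omega)]
    · show (if 1 ≤ j / 2 ∧ j / 2 ≤ n then _ else _) = _
      simp only [leafTab] at hij
      by_cases hc : 1 ≤ j / 2 ∧ j / 2 ≤ n
      · rw [if_pos hc]
        have hin : ¬ i = 0 := by omega
        by_cases hpar : j % 2 = 0
        · rw [if_pos hpar, if_neg hin]
        · rw [if_neg hpar]
          have hj2 : j / 2 ≤ n := hc.2
          have hL := leafL_lt hn hlen hc.1 hc.2
          rw [if_neg (by omega)]
      · rw [if_neg hc]

end Aux6

section Aux7
open HRHypergraph HRG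

variable {n : ℕ}

lemma isSome_ntSeq (hn : 0 < n) (u : List ℕ) :
    (ntSeq (starG n) (starG n).start u).isSome = true ↔
      (u.length ≤ n ∧ ∀ x ∈ u, x < 2) := by
  rw [ntSeq_start hn u]
  by_cases hc : u.length ≤ n ∧ ∀ x ∈ u, x < 2
  · rw [if_pos hc]
    simpa using hc
  · rw [if_neg hc]
    simpa using hc

lemma leaf_iff (hn : 0 < n) (u : List ℕ) :
    ((ntSeq (starG n) (starG n).start u).isSome = true ∧
        ∀ i : ℕ, ¬ (ntSeq (starG n) (starG n).start (u ++ [i])).isSome = true) ↔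
      (u.length = n ∧ ∀ x ∈ u, x < 2) := by
  constructor
  · rintro ⟨h1, h2⟩
    rw [isSome_ntSeq hn] at h1
    refine ⟨?_, h1.2⟩
    by_contra hne
    have hlt : u.length < n := lt_of_le_of_ne h1.1 hne
    have h0 := h2 0
    rw [isSome_ntSeq hn] at h0
    refine h0 ⟨by simp; omega, ?_⟩
    intro x hx
    rcases List.mem_append.mp hx with h | h
    · exact h1.2 x h
    · simp at h
      omega
  · rintro ⟨h1, h2⟩
    refine ⟨(isSome_ntSeq hn u).mpr ⟨le_of_eq h1, h2⟩, ?_⟩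
    intro i hi
    rw [isSome_ntSeq hn] at hi
    have := hi.1
    rw [List.length_append, List.length_singleton, h1] at this
    omega

lemma firstDiff : ∀ (u u' : List ℕ), u.length = u'.length → u ≠ u' →
    ∃ k, k < u.length ∧ u.take k = u'.take k ∧ u[k]? ≠ u'[k]? := by
  intro u
  induction u with
  | nil =>
    intro u' hl hne
    match u' with
    | [] => exact absurd rfl hne
    | _ :: _ => simp at hl
  | cons a t ih =>
    intro u' hl hne
    match u' with
    | [] => simp at hl
    | b :: t' =>
      by_cases hab : a = b
      · subst hab
        have hne' : t ≠ t' := fun h => hne (by rw [h])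
        obtain ⟨k, hk, htake, hget⟩ := ih t' (by simpa using hl) hne'
        refine ⟨k + 1, by simp; omega, by simp [htake], by simpa using hget⟩
      · exact ⟨0, by simp, by simp, by simpa using hab⟩

lemma models_fv (hn : 0 < n) (iN : Fin n → ℕ) {u : List ℕ} (hlu : u.length = n)
    (hvu : ∀ x ∈ u, x < 2) {t : Tableau (Fin n)}
    (ht : Models (starG n) iN none u t) {i : ℕ} (hi1 : 1 ≤ i) (hi2 : i ≤ n) :
    ∃ j', t.findVertex i 1 = some ((tgtR ((u.take i).reverse)).1.length, j')
      ∧ t.vtx (tgtR ((u.take i).reverse)).1.length j' = (tgtR ((u.take i).reverse)).2 := by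
  obtain ⟨Bs, hBs, hm, hrows, hnt, hfirst, hmain⟩ := ht.1
  have htne : u.take i ≠ [] := by
    intro h
    have := congrArg List.length h
    rw [List.length_take, List.length_nil] at this
    omega
  have hgat := graphAt_start_eq hn (u.take i) (by rw [List.length_take]; omega)
    (fun x hx => hvu x (List.mem_of_mem_take hx)) htne
  have h3 : ((starG n).rhs
      (⟨((u.take i).length - 1) % n, Nat.mod_lt _ hn⟩ : Fin n)).ext[1]? = some 3 := by
    rw [show ((starG n).rhs
      (⟨((u.take i).length - 1) % n, Nat.mod_lt _ hn⟩ : Fin n)).ext = [2, 3] from rfl]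
    simp
  have hint := (internal_exists hn (u.take i) (by rw [List.length_take]; omega)
    (fun x hx => hvu x (List.mem_of_mem_take hx)) htne).2
  exact (hmain i (by omega) _ hgat 1 3 h3).1 _ _ hint

lemma models_distinct (hn : 0 < n) (iN : Fin n → ℕ) (u u' : List ℕ)
    (hlu : u.length = n) (hvu : ∀ x ∈ u, x < 2)
    (hlu' : u'.length = n) (hvu' : ∀ x ∈ u', x < 2)
    (hne : u ≠ u') (t t' : Tableau (Fin n))
    (ht : Models (starG n) iN none u t) (ht' : Models (starG n) iN none u' t') : t ≠ t' := by
  rintro rfl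
  obtain ⟨k, hk, htake, hget⟩ := firstDiff u u' (by omega) hne
  have hkn : k < n := by omega
  obtain ⟨ja, hfa, hva⟩ := models_fv hn iN hlu hvu ht (i := k + 1) (by omega) (by omega)
  obtain ⟨jb, hfb, hvb⟩ := models_fv hn iN hlu' hvu' ht' (i := k + 1) (by omega) (by omega)
  rw [hfa] at hfb
  have hpair := Option.some_injective _ hfb
  have hfst : (tgtR ((u.take (k+1)).reverse)).1.length
      = (tgtR ((u'.take (k+1)).reverse)).1.length := congrArg Prod.fst hpair
  have hjj : ja = jb := congrArg Prod.snd hpair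
  rw [← hfst, ← hjj, hva] at hvb
  -- hvb : Tu.2 = Tu'.2 ; hfst : lengths equal
  obtain ⟨a, hgu⟩ : ∃ a, u[k]? = some a := ⟨_, List.getElem?_eq_getElem (by omega)⟩
  obtain ⟨b, hgu'⟩ : ∃ b, u'[k]? = some b := ⟨_, List.getElem?_eq_getElem (by omega)⟩
  have hab : a ≠ b := by
    intro h
    rw [hgu, hgu', h] at hget
    exact hget rfl
  have ha2 : a < 2 := by
    obtain ⟨hlt, rfl⟩ := List.getElem?_eq_some_iff.mp hgu
    exact hvu _ (List.getElem_mem hlt)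
  have hb2 : b < 2 := by
    obtain ⟨hlt, rfl⟩ := List.getElem?_eq_some_iff.mp hgu'
    exact hvu' _ (List.getElem_mem hlt)
  obtain ⟨a, rfl⟩ : ∃ a', a' = a := ⟨a, rfl⟩
  have hta : u.take (k+1) = u.take k ++ [a] := by
    rw [List.take_succ, hgu]
    rfl
  have htb : u'.take (k+1) = u.take k ++ [b] := by
    rw [List.take_succ, hgu', ← htake]
    rfl
  have hwlen : (u.take k).length = k := by
    rw [List.length_take]
    omega
  rw [hta, List.reverse_append] at hfst hvb
  rw [htb, List.reverse_append] at hfst hvb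
  simp only [List.reverse_singleton, List.singleton_append] at hfst hvb
  by_cases hw : u.take k = []
  · have hwrev : (u.take k).reverse = [] := by rw [hw]; rfl
    rw [hwrev] at hvb
    rcases (by omega : a = 0 ∨ a = 1) with rfl | rfl <;>
      rcases (by omega : b = 0 ∨ b = 1) with rfl | rfl
    · exact hab rfl
    · rw [tgtR_cons0, tgtR_cons1] at hvb
      simp [tgtR] at hvb
    · rw [tgtR_cons0, tgtR_cons1] at hvb
      simp [tgtR] at hvb
    · exact hab rfl
  · have hwrev : (u.take k).reverse ≠ [] := by simpa using hw
    have hlt := tgtR_len _ hwrev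
    rw [List.length_reverse, hwlen] at hlt
    rcases (by omega : a = 0 ∨ a = 1) with rfl | rfl <;>
      rcases (by omega : b = 0 ∨ b = 1) with rfl | rfl
    · exact hab rfl
    · rw [tgtR_cons0, if_neg hwrev, tgtR_cons1] at hfst
      simp only [List.length_reverse, hwlen] at hfst
      omega
    · rw [tgtR_cons1, tgtR_cons0, if_neg hwrev] at hfst
      simp only [List.length_reverse, hwlen] at hfst
      omega
    · exact hab rfl

lemma leafSet_eq (hn : 0 < n) :
    {u : List ℕ | u.length = n ∧ ∀ x ∈ u, x < 2}
      = (fun f : Fin n → Fin 2 => List.ofFn (fun j => (f j : ℕ))) '' Set.univ := by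
  ext u
  simp only [Set.mem_setOf_eq, Set.image_univ, Set.mem_range]
  constructor
  · rintro ⟨hl, hv⟩
    refine ⟨fun j => ⟨u[(j : ℕ)]'(by omega), hv _ (List.getElem_mem _)⟩, ?_⟩
    apply List.ext_getElem
    · simp [hl]
    · intro m h1 h2
      simp [List.getElem_ofFn]
  · rintro ⟨f, rfl⟩
    refine ⟨by simp, ?_⟩
    intro x hx
    obtain ⟨j, hj⟩ := List.mem_ofFn.mp hx
    rw [← hj]
    exact (f j).2

lemma leafSet_ncard (hn : 0 < n) :
    {u : List ℕ | u.length = n ∧ ∀ x ∈ u, x < 2}.ncard = 2 ^ n := by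
  rw [leafSet_eq hn]
  rw [Set.ncard_image_of_injective _ (fun f g h => ?_), Set.ncard_univ]
  · rw [Nat.card_eq_fintype_card]
    simp
  · have h2 := List.ofFn_inj.mp h
    funext j
    have := congrFun h2 j
    exact Fin.val_injective this

lemma leafSet_finite (hn : 0 < n) :
    {u : List ℕ | u.length = n ∧ ∀ x ∈ u, x < 2}.Finite := by
  rw [leafSet_eq hn]
  exact Set.Finite.image _ Set.finite_univ

end Aux7
section Statements

open HRHypergraph HRG

theorem stmt16 (n : ℕ) (hn : 1 ≤ n)
    (val : Fin n → HRHypergraph (Unit ⊕ Fin n)) (hval : (starG n).ValFamily val) :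
    ({u : List ℕ | (ntSeq (starG n) (starG n).start u).isSome = true ∧
        ∀ i : ℕ, ¬ (ntSeq (starG n) (starG n).start (u ++ [i])).isSome = true}.ncard
      = 2 ^ n) ∧
    (∀ u, ((ntSeq (starG n) (starG n).start u).isSome = true ∧
        ∀ i : ℕ, ¬ (ntSeq (starG n) (starG n).start (u ++ [i])).isSome = true) →
      ∃ t : Tableau (Fin n), Models (starG n) (iNodes val) none u t) ∧
    (∀ u u' : List ℕ,
      ((ntSeq (starG n) (starG n).start u).isSome = true ∧
        ∀ i : ℕ, ¬ (ntSeq (starG n) (starG n).start (u ++ [i])).isSome = true) →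
      ((ntSeq (starG n) (starG n).start u').isSome = true ∧
        ∀ i : ℕ, ¬ (ntSeq (starG n) (starG n).start (u' ++ [i])).isSome = true) →
      u ≠ u' →
      ∀ t t' : Tableau (Fin n), Models (starG n) (iNodes val) none u t →
        Models (starG n) (iNodes val) none u' t' → t ≠ t') ∧
    ∀ (T : Set (Tableau (Fin n))) (hT : T.Finite),
      (∀ u : List ℕ,
        ((ntSeq (starG n) (starG n).start u).isSome = true ∧
          ∀ i : ℕ, ¬ (ntSeq (starG n) (starG n).start (u ++ [i])).isSome = true) →
        ∃ t ∈ T, Models (starG n) (iNodes val) none u t) →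
      2 ^ n ≤ hT.toFinset.card := by
  classical
  have hn0 : 0 < n := hn
  have hSeq : {u : List ℕ | (ntSeq (starG n) (starG n).start u).isSome = true ∧
        ∀ i : ℕ, ¬ (ntSeq (starG n) (starG n).start (u ++ [i])).isSome = true} = {u : List ℕ | u.length = n ∧ ∀ x ∈ u, x < 2} := by
    ext u
    exact leaf_iff hn0 u
  have hcard : ({u : List ℕ | (ntSeq (starG n) (starG n).start u).isSome = true ∧
        ∀ i : ℕ, ¬ (ntSeq (starG n) (starG n).start (u ++ [i])).isSome = true}).ncard = 2 ^ n := by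
    rw [hSeq]
    exact leafSet_ncard hn0
  refine ⟨hcard, ?_, ?_, ?_⟩
  · intro u hu
    rw [leaf_iff hn0 u] at hu
    exact ⟨leafTab n (iNodes val) u, leaf_models hn0 _ u hu.1 hu.2⟩
  · intro u u' hu hu' hne t t' ht ht'
    rw [leaf_iff hn0 u] at hu
    rw [leaf_iff hn0 u'] at hu'
    exact models_distinct hn0 _ u u' hu.1 hu.2 hu'.1 hu'.2 hne t t' ht ht'
  · intro T hT hcov
    have hne : Nonempty (Tableau (Fin n)) := ⟨initTab (starG n) none 0⟩
    set Q : List ℕ → Prop := fun u =>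
      ((ntSeq (starG n) (starG n).start u).isSome = true ∧
        ∀ i : ℕ, ¬ (ntSeq (starG n) (starG n).start (u ++ [i])).isSome = true) with hQ
    have hcov' : ∀ u, Q u → ∃ t ∈ T, Models (starG n) (iNodes val) none u t := hcov
    set φ : List ℕ → Tableau (Fin n) := fun u =>
      if h : Q u then (hcov' u h).choose else Classical.arbitrary _ with hφ
    have hmem : ∀ u, Q u → φ u ∈ T ∧ Models (starG n) (iNodes val) none u (φ u) := by
      intro u h
      have : φ u = (hcov' u h).choose := by rw [hφ]; simp only [dif_pos h]
      rw [this]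
      obtain ⟨h1, h2⟩ := (hcov u h).choose_spec
      exact ⟨h1, h2⟩
    have hle : ({u : List ℕ | (ntSeq (starG n) (starG n).start u).isSome = true ∧
        ∀ i : ℕ, ¬ (ntSeq (starG n) (starG n).start (u ++ [i])).isSome = true}).ncard ≤ T.ncard := by
      refine Set.ncard_le_ncard_of_injOn φ ?_ ?_ hT
      · intro u hu
        exact (hmem u hu).1
      · intro u hu u' hu' heq
        by_contra hnequ
        have h1 := (hmem u hu).2
        have h2 := (hmem u' hu').2
        have hu2 := (leaf_iff hn0 u).mp hu
        have hu2' := (leaf_iff hn0 u').mp hu'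
        exact models_distinct hn0 _ u u' hu2.1 hu2.2 hu2'.1 hu2'.2 hnequ _ _ h1 h2 heq
    rw [hcard] at hle
    rwa [Set.ncard_eq_toFinset_card _ hT] at hle

end Statements
end Statements
end
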